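/- arXiv:2303.16440 — 3 statements merged into one kernel-verified Lean document; each statement's English description precedes it below -/
import Mathlib

section
/- Let 𝒢=(V,ℬ,E) be a Borel graph with Δ(𝒢) = Δ < ∞, ℰ its line graph, and ν an ℰ-quasi-invariant Borel probability measure on E whose Radon–Nikodym cocycle satisfies ρ_ν(e,f) ≤ 8Δ for every pair of adjacent edges e,f of the line graph. Suppose c is a partial coloring of 𝒢 that does not admit an improvement of weight L ∈ ℕ, where log_{8Δ}(L)/2 − 1 ≥ 2Δ. Then ν-almost every e ∈ U_c is (log_{8Δ}(L)/4)-bad for c, i.e., every 3-step Vizing chain at e has length at least log_{8Δ}(L)/2 + 2Δ. -/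
open MeasureTheory
open scoped ENNReal

/-- `G` has all vertex degrees at most `Δ`. -/
def DegreeBounded {V : Type} (G : SimpleGraph V) (Δ : ℕ) : Prop :=
  ∀ v : V, ∃ s : Finset V, ↑s = G.neighborSet v ∧ s.card ≤ Δ

/-- The line graph of `G`, on the type `Sym2 V`: two edges of `G` are adjacent
iff they are distinct and share exactly one vertex. -/
def lineGraph {V : Type} (G : SimpleGraph V) : SimpleGraph (Sym2 V) where
  Adj e f := e ∈ G.edgeSet ∧ f ∈ G.edgeSet ∧ e ≠ f ∧ ∃! v, v ∈ e ∧ v ∈ f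
  symm := by
    constructor
    rintro e f ⟨he, hf, hne, v, ⟨hv1, hv2⟩, hu⟩
    exact ⟨hf, he, hne.symm, v, ⟨hv2, hv1⟩, fun w hw => hu w ⟨hw.2, hw.1⟩⟩
  loopless := by constructor; rintro e ⟨_, _, h, _⟩; exact h rfl

/-- A Borel probability measure is quasi-invariant w.r.t. a Borel graph `H` if the
saturation (w.r.t. the connectedness relation of `H`) of every null set is null. -/
def QuasiInvariant {α : Type} [MeasurableSpace α] (H : SimpleGraph α) (μ : Measure α) : Prop :=
  ∀ A : Set α, MeasurableSet A → μ A = 0 → μ {y | ∃ x ∈ A, H.Reachable x y} = 0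

/-- `ρ` is a Radon–Nikodym cocycle of `μ` with respect to the relation `R`:
`μ (g '' C) = ∫⁻ x in C, ρ x (g x) ∂μ` for every Borel injection `g` on a Borel set `C`
whose graph is contained in `R`, and `ρ` takes values in `(0,∞)` on `R`. -/
def IsRNCocycle {α : Type} [MeasurableSpace α] (R : α → α → Prop) (μ : Measure α)
    (ρ : α → α → ℝ≥0∞) : Prop :=
  Measurable (Function.uncurry ρ) ∧
  (∀ x y, R x y → 0 < ρ x y ∧ ρ x y < ⊤) ∧
  ∀ (C : Set α) (g : α → α), MeasurableSet C → Measurable g → Set.InjOn g C →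
    (∀ x ∈ C, R x (g x)) → μ (g '' C) = ∫⁻ x in C, ρ x (g x) ∂μ

/-- A partial proper edge coloring of `G` with `Δ+1` colors. -/
def IsPartialColoring {V : Type} (G : SimpleGraph V) (Δ : ℕ)
    (c : Sym2 V → Option (Fin (Δ + 1))) : Prop :=
  (∀ e, (c e).isSome → e ∈ G.edgeSet) ∧
  ∀ e f : Sym2 V, e ≠ f → (∃ v, v ∈ e ∧ v ∈ f) → (c e).isSome → c e ≠ c f

/-- The set `U_c` of uncolored edges. -/
def uncolored {V : Type} (G : SimpleGraph V) {Δ : ℕ}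
    (c : Sym2 V → Option (Fin (Δ + 1))) : Set (Sym2 V) :=
  {e | e ∈ G.edgeSet ∧ c e = none}

/-- The set `m_c(x)` of colors missing at the vertex `x`. -/
def missing {V : Type} (G : SimpleGraph V) {Δ : ℕ}
    (c : Sym2 V → Option (Fin (Δ + 1))) (x : V) : Set (Fin (Δ + 1)) :=
  {γ | ∀ e ∈ G.edgeSet, x ∈ e → c e ≠ some γ}

/-- `γ` is the minimal color missing at `x`. -/
def IsMinMissing {V : Type} (G : SimpleGraph V) {Δ : ℕ}
    (c : Sym2 V → Option (Fin (Δ + 1))) (x : V) (γ : Fin (Δ + 1)) : Prop :=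
  γ ∈ missing G c x ∧ ∀ δ ∈ missing G c x, γ ≤ δ

/-- A (finite or infinite) sequence of edges, encoded as a function `ℕ → Option (Sym2 V)`
which, once `none`, stays `none`. -/
structure EChain (V : Type) where
  seq : ℕ → Option (Sym2 V)
  closed : ∀ n, seq n = none → seq (n + 1) = none

namespace EChain

variable {V : Type}

/-- An edge occurs in the chain. -/
def mem (P : EChain V) (e : Sym2 V) : Prop := ∃ n, P.seq n = some e

/-- The empty chain. -/
protected def empty : EChain V := ⟨fun _ => none, fun _ _ => rfl⟩

def IsEmptyC (P : EChain V) : Prop := P.seq 0 = none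

/-- Consecutive edges intersect. -/
def IsChainSeq (P : EChain V) : Prop :=
  ∀ n e f, P.seq n = some e → P.seq (n + 1) = some f → ∃ v, v ∈ e ∧ v ∈ f

/-- Every edge appears at most once. -/
def EdgeInj (P : EChain V) : Prop :=
  ∀ m n e, P.seq m = some e → P.seq n = some e → m = n

/-- `P ⊑ Q`: `P` is a prefix of `Q`. -/
def IsPrefix (P Q : EChain V) : Prop := ∀ n e, P.seq n = some e → Q.seq n = some e

/-- `P` has exactly `k` edges. -/
def lenEq (P : EChain V) (k : ℕ) : Prop := P.seq k = none ∧ ∀ n < k, (P.seq n).isSome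

/-- `P` is infinite. -/
protected def Infinite (P : EChain V) : Prop := ∀ n, (P.seq n).isSome

/-- The prefix of `P` consisting of its first `j` edges. -/
def take (P : EChain V) (j : ℕ) : EChain V where
  seq n := if n < j then P.seq n else none
  closed := by
    intro n h
    show (if n + 1 < j then P.seq (n + 1) else none) = none
    have h' : (if n < j then P.seq n else none) = none := h
    by_cases h1 : n + 1 < j
    · have h0 : n < j := by omega
      rw [if_pos h0] at h'
      rw [if_pos h1]
      exact P.closed n h'
    · rw [if_neg h1]

/-- Concatenation of chains (if `P` is infinite the result is `P`). -/
noncomputable def append (P Q : EChain V) : EChain V := by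
  classical
  exact
    { seq := fun n =>
        if h : ∃ k, P.seq k = none then
          (if n < Nat.find h then P.seq n else Q.seq (n - Nat.find h))
        else P.seq n
      closed := by
        intro n hn
        have hn' : (if h : ∃ k, P.seq k = none then
            (if n < Nat.find h then P.seq n else Q.seq (n - Nat.find h))
          else P.seq n) = none := hn
        show (if h : ∃ k, P.seq k = none then
            (if n + 1 < Nat.find h then P.seq (n + 1) else Q.seq (n + 1 - Nat.find h))
          else P.seq (n + 1)) = none
        by_cases h : ∃ k, P.seq k = none
        · rw [dif_pos h] at hn' ⊢
          by_cases hnm : n < Nat.find h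
          · rw [if_pos hnm] at hn'
            exact absurd hn' (Nat.find_min h hnm)
          · rw [if_neg hnm] at hn'
            rw [if_neg (by omega : ¬ n + 1 < Nat.find h)]
            rw [show n + 1 - Nat.find h = (n - Nat.find h) + 1 from by omega]
            exact Q.closed _ hn'
        · rw [dif_neg h] at hn' ⊢
          exact P.closed n hn' }

/-- The shift `c_P` of a partial coloring `c` along a chain `P`: each edge of `P`
receives the color of the following edge of `P` (the last edge becomes uncolored),
and edges off `P` keep their colors. -/
noncomputable def shift {Δ : ℕ} (P : EChain V) (c : Sym2 V → Option (Fin (Δ + 1))) :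
    Sym2 V → Option (Fin (Δ + 1)) := by
  classical
  exact fun e =>
    if h : ∃ n, P.seq n = some e then (P.seq (Nat.find h + 1)).bind c else c e

/-- `y` is the last vertex of the (finite) chain `P` started at `x`: if `P` is empty
then `y = x`, otherwise `y ≠ x` belongs to exactly one edge of `P`. -/
def IsLastVertexOf (P : EChain V) (x y : V) : Prop :=
  (P.seq 0 = none ∧ y = x) ∨
  (P.seq 0 ≠ none ∧ y ≠ x ∧ (∃ n e, P.seq n = some e ∧ y ∈ e) ∧
    ∀ m n e f, P.seq m = some e → P.seq n = some f → y ∈ e → y ∈ f → m = n)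

end EChain

/-- `P` is `c`-shiftable: a nonempty edge-injective chain of edges of `G` whose first
edge is uncolored and all other edges are colored. -/
structure IsShiftable {V : Type} (G : SimpleGraph V) (Δ : ℕ)
    (c : Sym2 V → Option (Fin (Δ + 1))) (P : EChain V) : Prop where
  chain : P.IsChainSeq
  edges : ∀ n e, P.seq n = some e → e ∈ G.edgeSet
  inj : P.EdgeInj
  first : ∃ e, P.seq 0 = some e ∧ c e = none
  rest : ∀ n e, P.seq (n + 1) = some e → (c e).isSome

/-- `P` is `c`-proper-shiftable: the shift of `c` along `P` is again a proper
partial coloring. -/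
def IsProperShiftable {V : Type} (G : SimpleGraph V) (Δ : ℕ)
    (c : Sym2 V → Option (Fin (Δ + 1))) (P : EChain V) : Prop :=
  IsShiftable G Δ c P ∧ IsPartialColoring G Δ (P.shift c)

/-- `P` is `c`-augmenting: `c`-proper-shiftable and either infinite or the endpoints
of its last edge have a common missing color after the shift. -/
def IsAugmenting {V : Type} (G : SimpleGraph V) (Δ : ℕ)
    (c : Sym2 V → Option (Fin (Δ + 1))) (P : EChain V) : Prop :=
  IsProperShiftable G Δ c P ∧
    (P.Infinite ∨ ∃ n e, P.seq n = some e ∧ P.seq (n + 1) = none ∧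
      ∃ γ : Fin (Δ + 1), ∀ v ∈ e, γ ∈ missing G (P.shift c) v)

/-- `P` is the maximal alternating `α/β`-path `P_c(x, α/β)` starting at `x`. -/
structure IsAltPath {V : Type} (G : SimpleGraph V) {Δ : ℕ}
    (c : Sym2 V → Option (Fin (Δ + 1))) (x : V) (α β : Fin (Δ + 1))
    (P : EChain V) : Prop where
  ne : α ≠ β
  startMissing : β ∈ missing G c x
  edges : ∀ n e, P.seq n = some e → e ∈ G.edgeSet
  chain : P.IsChainSeq
  inj : P.EdgeInj
  start : ∀ e, P.seq 0 = some e → x ∈ e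
  noback : ∀ e, P.seq 1 = some e → x ∉ e
  colors : ∀ n e, P.seq n = some e → c e = some (if n % 2 = 0 then α else β)
  maximal : ∀ k, P.lenEq k → ∀ y, P.IsLastVertexOf x y →
    ∀ f ∈ G.edgeSet, y ∈ f → c f ≠ some (if k % 2 = 0 then α else β)

/-- `F` is the maximal fan `F_c(x, e)` around `x` starting at the uncolored edge `e`. -/
structure IsMaxFan {V : Type} (G : SimpleGraph V) {Δ : ℕ}
    (c : Sym2 V → Option (Fin (Δ + 1))) (x : V) (e : Sym2 V) (F : EChain V) : Prop where
  first : F.seq 0 = some e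
  finite : ∃ k, F.seq k = none
  atx : ∀ n f, F.seq n = some f → x ∈ f ∧ f ∈ G.edgeSet
  inj : F.EdgeInj
  step : ∀ n f g, F.seq n = some f → F.seq (n + 1) = some g →
    ∀ v ∈ f, v ≠ x → ∃ γ, IsMinMissing G c v γ ∧ c g = some γ
  maximal : ∀ n f, F.seq n = some f → F.seq (n + 1) = none →
    ∀ v ∈ f, v ≠ x → ∀ γ, IsMinMissing G c v γ →
      ∀ g ∈ G.edgeSet, x ∈ g → c g = some γ → F.mem g

/-- `F` is the maximal `α/β`-conditional fan `F_c(·, α/β, y)` around `y`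
starting at the edge `f₀`. -/
structure IsMaxCondFan {V : Type} (G : SimpleGraph V) {Δ : ℕ}
    (c : Sym2 V → Option (Fin (Δ + 1))) (α β : Fin (Δ + 1)) (y : V) (f₀ : Sym2 V)
    (F : EChain V) : Prop where
  first : F.seq 0 = some f₀
  finite : ∃ k, F.seq k = none
  aty : ∀ n f, F.seq n = some f → y ∈ f ∧ f ∈ G.edgeSet
  inj : F.EdgeInj
  step : ∀ n f g, F.seq n = some f → F.seq (n + 1) = some g →
    ∀ v ∈ f, v ≠ y → ∃ γ, IsMinMissing G c v γ ∧ c g = some γ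
  cond : ∀ n f, F.seq n = some f → (F.seq (n + 1)).isSome →
    ∀ v ∈ f, v ≠ y → α ∉ missing G c v ∧ β ∉ missing G c v
  maximal : ∀ n f, F.seq n = some f → F.seq (n + 1) = none →
    ∀ v ∈ f, v ≠ y → (α ∉ missing G c v ∧ β ∉ missing G c v) →
      ∀ γ, IsMinMissing G c v γ →
        ∀ g ∈ G.edgeSet, y ∈ g → c g = some γ → F.mem g

/-- A decomposition of a `3`-step Vizing chain at the uncolored edge `e`:
`(F¹)⌢(P¹)⌢(F²)⌢(P²)⌢(F³)⌢(P³)` where `F¹ ⊑ F_c(y₁,e)`, `F² ⊑ F_c(z₁,α₁/β₁,y₂)`,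
`F³ ⊑ F_c(z₂,α₂/β₂,y₃)`, `Pⁱ ⊑ P_c(z_i,α_i/β_i)`, the anchor vertices are pairwise
distinct, any segment after an empty segment is empty, and the concatenation is a
`c`-augmenting chain starting at `e`. -/
structure VizingDecomp {V : Type} (G : SimpleGraph V) (Δ : ℕ)
    (c : Sym2 V → Option (Fin (Δ + 1))) (e : Sym2 V)
    (y₁ y₂ y₃ z₁ z₂ z₃ : V) (α₁ β₁ α₂ β₂ α₃ β₃ : Fin (Δ + 1))
    (F1 P1 F2 P2 F3 P3 : EChain V) : Prop where
  uncoloredEdge : e ∈ G.edgeSet ∧ c e = none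
  distinct : List.Pairwise (· ≠ ·) [y₁, y₂, y₃, z₁, z₂, z₃]
  prefF1 : ∃ MF, IsMaxFan G c y₁ e MF ∧ F1.IsPrefix MF
  prefP1 : ∃ Q, IsAltPath G c z₁ α₁ β₁ Q ∧ P1.IsPrefix Q
  prefF2 : ∃ f MF, IsMaxCondFan G c α₁ β₁ y₂ f MF ∧ F2.IsPrefix MF
  prefP2 : ∃ Q, IsAltPath G c z₂ α₂ β₂ Q ∧ P2.IsPrefix Q
  prefF3 : ∃ f MF, IsMaxCondFan G c α₂ β₂ y₃ f MF ∧ F3.IsPrefix MF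
  prefP3 : ∃ Q, IsAltPath G c z₃ α₃ β₃ Q ∧ P3.IsPrefix Q
  tail1 : F1.IsEmptyC → P1.IsEmptyC
  tail2 : P1.IsEmptyC → F2.IsEmptyC
  tail3 : F2.IsEmptyC → P2.IsEmptyC
  tail4 : P2.IsEmptyC → F3.IsEmptyC
  tail5 : F3.IsEmptyC → P3.IsEmptyC
  firstEdge : (F1.append (P1.append (F2.append (P2.append (F3.append P3))))).seq 0 = some e
  aug : IsAugmenting G Δ c (F1.append (P1.append (F2.append (P2.append (F3.append P3)))))

/-- `W` is a `3`-step Vizing chain at the uncolored edge `e`. -/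
def IsVizingChain3 {V : Type} (G : SimpleGraph V) (Δ : ℕ)
    (c : Sym2 V → Option (Fin (Δ + 1))) (e : Sym2 V) (W : EChain V) : Prop :=
  ∃ (y₁ y₂ y₃ z₁ z₂ z₃ : V) (α₁ β₁ α₂ β₂ α₃ β₃ : Fin (Δ + 1))
    (F1 P1 F2 P2 F3 P3 : EChain V),
    VizingDecomp G Δ c e y₁ y₂ y₃ z₁ z₂ z₃ α₁ β₁ α₂ β₂ α₃ β₃ F1 P1 F2 P2 F3 P3 ∧
    W = F1.append (P1.append (F2.append (P2.append (F3.append P3))))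

/-- `e` is `K`-bad for `c`: every `3`-step Vizing chain at `e` has length at least
`2K + 2Δ`. -/
def KBad {V : Type} (G : SimpleGraph V) (Δ : ℕ)
    (c : Sym2 V → Option (Fin (Δ + 1))) (K : ℕ) (e : Sym2 V) : Prop :=
  ∀ W, IsVizingChain3 G Δ c e W → ∀ n < 2 * K + 2 * Δ, (W.seq n).isSome

/-- The weight `Σ_{f ∈ W} ρ(e, f)` of a chain `W` relative to `e`. -/
noncomputable def chainWeight {V : Type} (ρ : Sym2 V → Sym2 V → ℝ≥0∞)
    (e : Sym2 V) (W : EChain V) : ℝ≥0∞ :=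
  ∑' n, (W.seq n).elim 0 (fun f => ρ e f)

/-- `c` (Borel, with cocycle `ρ` of `ν`) does not admit an improvement of weight `L`. -/
def NoImprovement {V : Type} [MeasurableSpace V] (G : SimpleGraph V) (Δ : ℕ)
    (ν : Measure (Sym2 V)) (ρ : Sym2 V → Sym2 V → ℝ≥0∞)
    (c : Sym2 V → Option (Fin (Δ + 1))) (L : ℕ) : Prop :=
  ν {e | e ∈ G.edgeSet ∧ c e = none ∧
      ∃ W, IsVizingChain3 G Δ c e W ∧ chainWeight ρ e W ≤ (L : ℝ≥0∞)} = 0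

/-- `c` is a Borel partial coloring: preimages of colors are Borel. -/
def MeasurableColoring {V : Type} [MeasurableSpace V] {Δ : ℕ}
    (c : Sym2 V → Option (Fin (Δ + 1))) : Prop :=
  ∀ o : Option (Fin (Δ + 1)), MeasurableSet {e | c e = o}

/-- Edges `e`, `f` have distance at least `k` in the line graph of `G`. -/
noncomputable def edgeDistGE {V : Type} (G : SimpleGraph V) (e f : Sym2 V) (k : ℕ) : Prop :=
  ¬ (lineGraph G).Reachable e f ∨ k ≤ (lineGraph G).dist e f

/-- The pairs `(f¹, f²)` of colored edges that are the first edges of the segments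
`F²`, `F³` of some `3`-step Vizing chain at `e`. -/
def VizingPair {V : Type} (G : SimpleGraph V) (Δ : ℕ)
    (c : Sym2 V → Option (Fin (Δ + 1))) (e : Sym2 V) (p : Sym2 V × Sym2 V) : Prop :=
  (c p.1).isSome ∧ (c p.2).isSome ∧
  ∃ (y₁ y₂ y₃ z₁ z₂ z₃ : V) (α₁ β₁ α₂ β₂ α₃ β₃ : Fin (Δ + 1))
    (F1 P1 F2 P2 F3 P3 : EChain V),
    VizingDecomp G Δ c e y₁ y₂ y₃ z₁ z₂ z₃ α₁ β₁ α₂ β₂ α₃ β₃ F1 P1 F2 P2 F3 P3 ∧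
    F2.seq 0 = some p.1 ∧ F3.seq 0 = some p.2

/-! ### Auxiliary machinery: measurable uniformization of bounded-section relations -/

section UnifSec
open Set
variable {X : Type} [MeasurableSpace X] [StandardBorelSpace X]

lemma exists_graphFun (Gr : Set (X × X)) (hGr : MeasurableSet Gr)
    (uniq : ∀ x y y', (x, y) ∈ Gr → (x, y') ∈ Gr → y = y') :
    ∃ u : X → X, Measurable u ∧ ∀ x y, (x, y) ∈ Gr → u x = y := by
  classical
  have hinj : ∀ s ⊆ Gr, Set.InjOn Prod.fst s := by
    intro s hs p hp q hq hpq
    have := uniq p.1 p.2 q.2 (by simpa using hs hp) (by rw [hpq]; simpa using hs hq)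
    exact Prod.ext hpq this
  refine ⟨fun x => if hx : ∃ y, (x, y) ∈ Gr then hx.choose else x, ?_, ?_⟩
  · intro W hW
    have hD : MeasurableSet (Prod.fst '' Gr) :=
      hGr.image_of_measurable_injOn measurable_fst (hinj _ (subset_refl _))
    have h1 : MeasurableSet (Prod.fst '' (Gr ∩ (Set.univ ×ˢ W))) := by
      refine (hGr.inter (MeasurableSet.univ.prod hW)).image_of_measurable_injOn measurable_fst
        (hinj _ inter_subset_left)
    have heq : (fun x => if hx : ∃ y, (x, y) ∈ Gr then hx.choose else x) ⁻¹' W =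
        (Prod.fst '' (Gr ∩ (Set.univ ×ˢ W))) ∪ (W \ (Prod.fst '' Gr)) := by
      ext x
      constructor
      · intro hx
        simp only [mem_preimage] at hx
        by_cases h : ∃ y, (x, y) ∈ Gr
        · rw [dif_pos h] at hx
          exact Or.inl ⟨(x, h.choose), ⟨h.choose_spec, ⟨trivial, hx⟩⟩, rfl⟩
        · rw [dif_neg h] at hx
          refine Or.inr ⟨hx, ?_⟩
          rintro ⟨p, hp, rfl⟩
          exact h ⟨p.2, hp⟩
      · intro hx
        simp only [mem_preimage]
        rcases hx with ⟨p, ⟨hpGr, ⟨_, hpW⟩⟩, rfl⟩ | ⟨hxW, hxD⟩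
        · have h : ∃ y, (p.1, y) ∈ Gr := ⟨p.2, hpGr⟩
          rw [dif_pos h]
          rwa [uniq p.1 h.choose p.2 h.choose_spec hpGr]
        · have h : ¬ ∃ y, (x, y) ∈ Gr := fun ⟨y, hy⟩ => hxD ⟨(x, y), hy, rfl⟩
          rwa [dif_neg h]
    rw [heq]
    exact h1.union (hW.diff hD)
  · intro x y hxy
    have h : ∃ y, (x, y) ∈ Gr := ⟨y, hxy⟩
    show (if hx : ∃ y, (x, y) ∈ Gr then hx.choose else x) = y
    rw [dif_pos h]
    exact uniq x h.choose y h.choose_spec hxy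


lemma unif (h : X → ℝ) (hmeas : Measurable h) (hinj : Function.Injective h) :
    ∀ (N : ℕ) (A : Set (X × X)), MeasurableSet A →
      (∀ x, ∃ F : Finset X, {y | (x, y) ∈ A} ⊆ ↑F ∧ F.card ≤ N) →
      ∃ (dom : Fin N → Set X) (g : Fin N → X → X),
        (∀ i, MeasurableSet (dom i)) ∧ (∀ i, Measurable (g i)) ∧
        (∀ i x, x ∈ dom i → (x, g i x) ∈ A) ∧
        (∀ x y, (x, y) ∈ A → ∃ i, x ∈ dom i ∧ g i x = y) := by
  intro N
  induction N with
  | zero =>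
    intro A _ hsec
    refine ⟨fun i => i.elim0, fun i => i.elim0, fun i => i.elim0, fun i => i.elim0,
      fun i => i.elim0, ?_⟩
    intro x y hxy
    obtain ⟨F, hF, hcard⟩ := hsec x
    have hy := hF hxy
    rw [Nat.le_zero, Finset.card_eq_zero] at hcard
    simp [hcard] at hy
  | succ k IH =>
    intro A hA hsec
    classical
    set S : Set (X × (Fin (k+1) → X)) :=
      {p | (∀ i, (p.1, p.2 i) ∈ A) ∧ ∀ i j : Fin (k+1), i < j → h (p.2 i) < h (p.2 j)} with hSdef
    have hSmeas : MeasurableSet S := by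
      have h1 : MeasurableSet {p : X × (Fin (k+1) → X) | ∀ i, (p.1, p.2 i) ∈ A} := by
        rw [Set.setOf_forall]
        exact MeasurableSet.iInter fun i =>
          (measurable_fst.prodMk ((measurable_pi_apply i).comp measurable_snd)) hA
      have h2 : MeasurableSet
          {p : X × (Fin (k+1) → X) | ∀ i j : Fin (k+1), i < j → h (p.2 i) < h (p.2 j)} := by
        rw [Set.setOf_forall]
        refine MeasurableSet.iInter fun i => ?_
        rw [Set.setOf_forall]
        refine MeasurableSet.iInter fun j => ?_
        by_cases hij : i < j
        · simp only [hij, true_implies]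
          exact measurableSet_lt (hmeas.comp ((measurable_pi_apply i).comp measurable_snd))
            (hmeas.comp ((measurable_pi_apply j).comp measurable_snd))
        · simp only [hij, false_implies, Set.setOf_true]
          exact MeasurableSet.univ
      have : S = {p : X × (Fin (k+1) → X) | ∀ i, (p.1, p.2 i) ∈ A} ∩
          {p | ∀ i j : Fin (k+1), i < j → h (p.2 i) < h (p.2 j)} := by
        ext p; simp [hSdef, Set.mem_setOf_eq, Set.mem_inter_iff]
      rw [this]; exact h1.inter h2
    have Suniq : ∀ x t t', (x, t) ∈ S → (x, t') ∈ S → t = t' := by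
      intro x t t' ht ht'
      obtain ⟨F, hF, hcard⟩ := hsec x
      have hst : StrictMono (fun i => h (t i)) := fun i j hij => ht.2 i j hij
      have hst' : StrictMono (fun i => h (t' i)) := fun i j hij => ht'.2 i j hij
      set Fr := F.image h with hFrdef
      have hFr : Fr.card ≤ k + 1 := le_trans Finset.card_image_le hcard
      have key : ∀ (s : Fin (k+1) → X), (∀ i, (x, s i) ∈ A) → StrictMono (fun i => h (s i)) →
          ∃ hc : Fr.card = k + 1, (fun i => h (s i)) = Fr.orderEmbOfFin hc := by
        intro s hsA hsm
        have hmem : ∀ i, h (s i) ∈ Fr :=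
          fun i => Finset.mem_image_of_mem h (hF (hsA i))
        have himg : (Finset.univ.image fun i => h (s i)) = Fr := by
          apply Finset.eq_of_subset_of_card_le
          · intro r hr
            obtain ⟨i, _, rfl⟩ := Finset.mem_image.mp hr
            exact hmem i
          · have hc2 : (Finset.univ.image fun i => h (s i)).card = k + 1 := by
              rw [Finset.card_image_of_injective _ hsm.injective, Finset.card_univ,
                Fintype.card_fin]
            omega
        have hc : Fr.card = k + 1 := by
          rw [← himg, Finset.card_image_of_injective _ hsm.injective, Finset.card_univ,
            Fintype.card_fin]
        exact ⟨hc, Finset.orderEmbOfFin_unique hc (fun i => hmem i) hsm⟩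
      obtain ⟨hc, he1⟩ := key t ht.1 hst
      obtain ⟨hc', he2⟩ := key t' ht'.1 hst'
      funext i
      apply hinj
      have : (fun i => h (t i)) i = (fun i => h (t' i)) i := by rw [he1, he2]
      exact this
    set X1 : Set X := Prod.fst '' S with hX1def
    have hX1meas : MeasurableSet X1 := by
      apply hSmeas.image_of_measurable_injOn measurable_fst
      intro p hp q hq hpq
      have hq' : (p.1, q.2) ∈ S := by rw [hpq]; exact hq
      exact Prod.ext hpq (Suniq p.1 p.2 q.2 hp hq')
    -- coordinate selector functions
    have hGr : ∀ i : Fin (k+1), ∃ u : X → X, Measurable u ∧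
        ∀ x y, (x, y) ∈ ((fun p : X × (Fin (k+1) → X) => (p.1, p.2 i)) '' S) → u x = y := by
      intro i
      have huniq : ∀ x y y', (x, y) ∈ ((fun p : X × (Fin (k+1) → X) => (p.1, p.2 i)) '' S) →
          (x, y') ∈ ((fun p : X × (Fin (k+1) → X) => (p.1, p.2 i)) '' S) → y = y' := by
        rintro x y y' ⟨p, hp, hpe⟩ ⟨q, hq, hqe⟩
        obtain ⟨hp1, hp2⟩ := Prod.mk.injEq .. ▸ hpe
        obtain ⟨hq1, hq2⟩ := Prod.mk.injEq .. ▸ hqe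
        have hq' : (p.1, q.2) ∈ S := by
          have : q.1 = p.1 := by rw [hp1, hq1]
          rw [← this]; exact hq
        have := Suniq p.1 p.2 q.2 hp hq'
        rw [← hp2, ← hq2, this]
      refine exists_graphFun _ ?_ huniq
      exact hSmeas.image_of_measurable_injOn
        (measurable_fst.prodMk ((measurable_pi_apply i).comp measurable_snd))
        (by
          intro p hp q hq hpq
          obtain ⟨h1, h2⟩ := Prod.mk.injEq .. ▸ hpq
          have hq' : (p.1, q.2) ∈ S := by rw [h1]; exact hq
          exact Prod.ext h1 (Suniq p.1 p.2 q.2 hp hq'))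
    choose u humeas huspec using hGr
    have fact1 : ∀ x ∈ X1, ∃ t, (x, t) ∈ S ∧ ∀ i, u i x = t i := by
      rintro x ⟨p, hp, rfl⟩
      exact ⟨p.2, hp, fun i => huspec i p.1 (p.2 i) ⟨p, hp, rfl⟩⟩
    have fact2 : ∀ x ∈ X1, ∀ y, (x, y) ∈ A → ∃ i, u i x = y := by
      intro x hx y hxy
      obtain ⟨t, htS, hut⟩ := fact1 x hx
      obtain ⟨htSA, htSm⟩ := htS
      obtain ⟨F, hF, hcard⟩ := hsec x
      by_contra hcon
      push_neg at hcon
      have hty : ∀ i, t i ≠ y := fun i hiy => hcon i (by rw [hut i, hiy])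
      have htinj : Function.Injective t := by
        have hstm : StrictMono (fun i => h (t i)) := fun i j hij => htSm i j hij
        have : Function.Injective (fun i => h (t i)) := hstm.injective
        exact fun i j hij => this (by simp [hij])
      have hsub : insert y (Finset.univ.image t) ⊆ F := by
        intro z hz
        rcases Finset.mem_insert.mp hz with rfl | hz
        · exact hF hxy
        · obtain ⟨i, _, rfl⟩ := Finset.mem_image.mp hz
          exact hF (htSA i)
      have hcard2 : (insert y (Finset.univ.image t)).card = k + 2 := by
        rw [Finset.card_insert_of_notMem (by
          intro hy
          obtain ⟨i, _, hiy⟩ := Finset.mem_image.mp hy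
          exact hty i hiy)]
        rw [Finset.card_image_of_injective _ htinj, Finset.card_univ, Fintype.card_fin]
      have := Finset.card_le_card hsub
      omega
    have fact3 : ∀ x, x ∉ X1 → ∃ T : Finset X, {y | (x, y) ∈ A} ⊆ ↑T ∧ T.card ≤ k := by
      intro x hx
      obtain ⟨F, hF, hcard⟩ := hsec x
      refine ⟨F.filter (fun y => (x, y) ∈ A), ?_, ?_⟩
      · intro y hy
        exact Finset.mem_coe.mpr (Finset.mem_filter.mpr ⟨hF hy, hy⟩)
      · by_contra hTc
        push_neg at hTc
        set T := F.filter (fun y => (x, y) ∈ A) with hTdef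
        set Tr := T.image h with hTrdef
        have hTr : k + 1 ≤ Tr.card := by
          rw [hTrdef, Finset.card_image_of_injective _ hinj]; omega
        set emb := Tr.orderEmbOfCardLe hTr with hembdef
        have hmem : ∀ i : Fin (k+1), emb i ∈ Tr := fun i => Tr.orderEmbOfCardLe_mem hTr i
        have hsel : ∀ i : Fin (k+1), ∃ z, z ∈ T ∧ h z = emb i := by
          intro i
          obtain ⟨z, hz, hze⟩ := Finset.mem_image.mp (hmem i)
          exact ⟨z, hz, hze⟩
        choose yy hyT hyh using hsel
        apply hx
        refine ⟨(x, yy), ⟨fun i => (Finset.mem_filter.mp (hyT i)).2, ?_⟩, rfl⟩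
        intro i j hij
        show h (yy i) < h (yy j)
        rw [hyh i, hyh j]
        exact emb.strictMono hij
    set A' : Set (X × X) := A \ (X1 ×ˢ Set.univ) with hA'def
    have hA'meas : MeasurableSet A' := hA.diff (hX1meas.prod MeasurableSet.univ)
    have hsec' : ∀ x, ∃ F : Finset X, {y | (x, y) ∈ A'} ⊆ ↑F ∧ F.card ≤ k := by
      intro x
      by_cases hx : x ∈ X1
      · refine ⟨∅, ?_, by simp⟩
        intro y hy
        exact absurd ⟨hx, trivial⟩ hy.2
      · obtain ⟨T, hT, hTc⟩ := fact3 x hx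
        exact ⟨T, fun y hy => hT hy.1, hTc⟩
    obtain ⟨dom', g', hdom'meas, hg'meas, hcompat', hcomplete'⟩ := IH A' hA'meas hsec'
    refine ⟨fun i => X1 ∪ (if hik : (i : ℕ) < k then dom' ⟨i, hik⟩ else ∅),
      fun i => X1.piecewise (u i) (fun x => if hik : (i : ℕ) < k then g' ⟨i, hik⟩ x else x),
      ?_, ?_, ?_, ?_⟩
    · intro i
      refine hX1meas.union ?_
      by_cases hik : (i : ℕ) < k
      · simp only [dif_pos hik]; exact hdom'meas _
      · simp only [dif_neg hik]; exact MeasurableSet.empty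
    · intro i
      refine Measurable.piecewise hX1meas (humeas i) ?_
      by_cases hik : (i : ℕ) < k
      · simp only [dif_pos hik]; exact hg'meas _
      · simp only [dif_neg hik]; exact measurable_id
    · intro i x hx
      by_cases hx1 : x ∈ X1
      · obtain ⟨t, htS, hut⟩ := fact1 x hx1
        show (x, X1.piecewise (u i) _ x) ∈ A
        rw [Set.piecewise_eq_of_mem _ _ _ hx1, hut i]
        exact htS.1 i
      · rcases hx with hx1' | hx2
        · exact absurd hx1' hx1
        · by_cases hik : (i : ℕ) < k
          · rw [dif_pos hik] at hx2
            show (x, X1.piecewise (u i) _ x) ∈ A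
            rw [Set.piecewise_eq_of_notMem _ _ _ hx1]
            simp only [dif_pos hik]
            exact (hcompat' ⟨i, hik⟩ x hx2).1
          · rw [dif_neg hik] at hx2
            exact absurd hx2 (Set.notMem_empty x)
    · intro x y hxy
      by_cases hx1 : x ∈ X1
      · obtain ⟨i, hi⟩ := fact2 x hx1 y hxy
        refine ⟨i, Or.inl hx1, ?_⟩
        show X1.piecewise (u i) _ x = y
        rw [Set.piecewise_eq_of_mem _ _ _ hx1, hi]
      · have hxy' : (x, y) ∈ A' := ⟨hxy, fun hmem => hx1 hmem.1⟩
        obtain ⟨j, hjdom, hjg⟩ := hcomplete' x y hxy'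
        have hjk : (j : ℕ) < k := j.isLt
        refine ⟨⟨j, Nat.lt_succ_of_lt hjk⟩, Or.inr ?_, ?_⟩
        · rw [dif_pos hjk]
          simpa using hjdom
        · show X1.piecewise (u ⟨↑j, _⟩) _ x = y
          rw [Set.piecewise_eq_of_notMem _ _ _ hx1]
          simp only [dif_pos hjk]
          simpa using hjg

end UnifSec

/-- Distinct edges share at most one vertex. -/
lemma common_unique {V : Type} {e f : Sym2 V} (hef : e ≠ f) {u v : V}
    (hu1 : u ∈ e) (hu2 : u ∈ f) (hv1 : v ∈ e) (hv2 : v ∈ f) : u = v := by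
  by_contra hne
  have he : e = s(u, v) := (Sym2.mem_and_mem_iff hne).mp ⟨hu1, hv1⟩
  have hf : f = s(u, v) := (Sym2.mem_and_mem_iff hne).mp ⟨hu2, hv2⟩
  exact hef (he.trans hf.symm)


/-- A measurable system of "neighbor maps" enumerating the line graph adjacency. -/
structure NbrSys (V : Type) [MeasurableSpace V] (G : SimpleGraph V) (M : ℕ) where
  emb : Sym2 V → ℝ
  meas_emb : Measurable emb
  inj_emb : Function.Injective emb
  dom : Fin M → Set (Sym2 V)
  nbr : Fin M → Sym2 V → Sym2 V
  meas_dom : ∀ i, MeasurableSet (dom i)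
  meas_nbr : ∀ i, Measurable (nbr i)
  adj : ∀ i e, e ∈ dom i → (lineGraph G).Adj e (nbr i e)
  complete : ∀ e f, (lineGraph G).Adj e f → ∃ i, e ∈ dom i ∧ nbr i e = f


section Bridge
variable {V : Type} [MeasurableSpace V] [StandardBorelSpace V]

lemma measurable_of_comp_mk {β : Type*} [MeasurableSpace β] {f : Sym2 V → β}
    (h : Measurable (f ∘ Sym2.mk.uncurry)) : Measurable f := fun _s hs => h hs

lemma exists_nbrSys (Δ : ℕ) (G : SimpleGraph V) (hE : MeasurableSet G.edgeSet)
    (hdeg : DegreeBounded G Δ) : Nonempty (NbrSys V G (2 * Δ)) := by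
  classical
  obtain ⟨h₀, hh₀⟩ := exists_measurableEmbedding_real V
  set fs : {f : V → V → V × V // ∀ a b, f a b = f b a} :=
    ⟨fun a b => if h₀ a ≤ h₀ b then (a, b) else (b, a), by
      intro a b
      show (if h₀ a ≤ h₀ b then (a, b) else (b, a)) = (if h₀ b ≤ h₀ a then (b, a) else (a, b))
      rcases le_or_gt (h₀ a) (h₀ b) with hab | hab
      · rw [if_pos hab]
        rcases le_or_gt (h₀ b) (h₀ a) with hba | hba
        · have : a = b := hh₀.injective (le_antisymm hab hba)
          subst this; simp
        · rw [if_neg (not_le.mpr hba)]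
      · rw [if_neg (not_le.mpr hab), if_pos hab.le]⟩ with hfs
  set σ : Sym2 V → V × V := Sym2.lift fs with hσ
  have σmk : ∀ a b : V, σ s(a, b) = if h₀ a ≤ h₀ b then (a, b) else (b, a) := by
    intro a b; rw [hσ, Sym2.lift_mk]
  have mkσ : ∀ e : Sym2 V, Sym2.mk.uncurry (σ e) = e := by
    refine Sym2.ind (fun a b => ?_)
    rw [σmk]
    split
    · rfl
    · exact Sym2.eq_swap
  have σinj : Function.Injective σ := fun e f hef => by rw [← mkσ e, ← mkσ f, hef]
  have σmeas : Measurable σ := by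
    apply measurable_of_comp_mk
    have : σ ∘ Sym2.mk.uncurry = fun p : V × V => if h₀ p.1 ≤ h₀ p.2 then p else p.swap := by
      funext p
      cases p with
      | mk a b => show σ s(a,b) = _; rw [σmk]; rfl
    rw [this]
    exact Measurable.ite (measurableSet_le (hh₀.measurable.comp measurable_fst)
      (hh₀.measurable.comp measurable_snd)) measurable_id measurable_swap
  have memσ : ∀ (v : V) (e : Sym2 V), v ∈ e ↔ v = (σ e).1 ∨ v = (σ e).2 := by
    intro v
    refine Sym2.ind (fun a b => ?_)
    rw [σmk]
    split
    · exact Sym2.mem_iff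
    · rw [Sym2.mem_iff]; dsimp; tauto
  have sortedσ : ∀ e : Sym2 V, h₀ (σ e).1 ≤ h₀ (σ e).2 := by
    refine Sym2.ind (fun a b => ?_)
    rw [σmk]
    split
    · assumption
    · next hc => exact (not_le.mp hc).le
  have σsorted : ∀ p : V × V, h₀ p.1 ≤ h₀ p.2 → σ (Sym2.mk.uncurry p) = p := by
    rintro ⟨a, b⟩ hab
    show σ s(a,b) = _
    rw [σmk, if_pos hab]
  have edge_ne : ∀ p : V × V, Sym2.mk.uncurry p ∈ G.edgeSet → p.1 ≠ p.2 := by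
    rintro ⟨a, b⟩ hp
    exact (G.mem_edgeSet.mp hp).ne
  obtain ⟨hX, hhX⟩ := exists_measurableEmbedding_real (V × V)
  set A : Set ((V × V) × (V × V)) := {pq | h₀ pq.1.1 ≤ h₀ pq.1.2 ∧ h₀ pq.2.1 ≤ h₀ pq.2.2 ∧
    Sym2.mk.uncurry pq.1 ∈ G.edgeSet ∧ Sym2.mk.uncurry pq.2 ∈ G.edgeSet ∧ pq.1 ≠ pq.2 ∧
    (pq.1.1 = pq.2.1 ∨ pq.1.1 = pq.2.2 ∨ pq.1.2 = pq.2.1 ∨ pq.1.2 = pq.2.2)} with hA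
  have hAmeas : MeasurableSet A := by
    have m11 : Measurable fun pq : (V × V) × (V × V) => pq.1.1 :=
      measurable_fst.comp measurable_fst
    have m12 : Measurable fun pq : (V × V) × (V × V) => pq.1.2 :=
      measurable_snd.comp measurable_fst
    have m21 : Measurable fun pq : (V × V) × (V × V) => pq.2.1 :=
      measurable_fst.comp measurable_snd
    have m22 : Measurable fun pq : (V × V) × (V × V) => pq.2.2 :=
      measurable_snd.comp measurable_snd
    have heq : ∀ (f g : (V × V) × (V × V) → V), Measurable f → Measurable g →
        MeasurableSet {pq | f pq = g pq} := by
      intro f g hf hg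
      have : {pq | f pq = g pq} = {pq | h₀ (f pq) ≤ h₀ (g pq)} ∩ {pq | h₀ (g pq) ≤ h₀ (f pq)} := by
        ext pq
        simp only [Set.mem_setOf_eq, Set.mem_inter_iff]
        constructor
        · rintro h; rw [h]; exact ⟨le_refl _, le_refl _⟩
        · rintro ⟨h1, h2⟩; exact hh₀.injective (le_antisymm h1 h2)
      rw [this]
      exact (measurableSet_le (hh₀.measurable.comp hf) (hh₀.measurable.comp hg)).inter
        (measurableSet_le (hh₀.measurable.comp hg) (hh₀.measurable.comp hf))
    have hpair : ∀ (f g : (V × V) × (V × V) → V × V), Measurable f → Measurable g →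
        MeasurableSet {pq | f pq = g pq} := by
      intro f g hf hg
      have : {pq | f pq = g pq} = {pq | hX (f pq) = hX (g pq)} := by
        ext pq
        simp only [Set.mem_setOf_eq]
        exact ⟨fun h => by rw [h], fun h => hhX.injective h⟩
      rw [this]
      have : {pq | hX (f pq) = hX (g pq)} =
          {pq | hX (f pq) ≤ hX (g pq)} ∩ {pq | hX (g pq) ≤ hX (f pq)} := by
        ext pq
        simp only [Set.mem_setOf_eq, Set.mem_inter_iff]
        constructor
        · rintro h; rw [h]; exact ⟨le_refl _, le_refl _⟩
        · rintro ⟨h1, h2⟩; exact le_antisymm h1 h2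
      rw [this]
      exact (measurableSet_le (hhX.measurable.comp hf) (hhX.measurable.comp hg)).inter
        (measurableSet_le (hhX.measurable.comp hg) (hhX.measurable.comp hf))
    refine MeasurableSet.inter ?_ (MeasurableSet.inter ?_ (MeasurableSet.inter ?_
      (MeasurableSet.inter ?_ (MeasurableSet.inter ?_ ?_))))
    · exact measurableSet_le (hh₀.measurable.comp m11) (hh₀.measurable.comp m12)
    · exact measurableSet_le (hh₀.measurable.comp m21) (hh₀.measurable.comp m22)
    · exact (measurable_quot_mk.comp measurable_fst) hE
    · exact (measurable_quot_mk.comp measurable_snd) hE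
    · exact (hpair _ _ measurable_fst measurable_snd).compl
    · exact ((heq _ _ m11 m21).union ((heq _ _ m11 m22).union
        ((heq _ _ m12 m21).union (heq _ _ m12 m22))))
  have hA_adj : ∀ p q : V × V, (p, q) ∈ A → (lineGraph G).Adj (Sym2.mk.uncurry p) (Sym2.mk.uncurry q) := by
    rintro ⟨a, b⟩ ⟨c, d⟩ ⟨hs1', hs2', he1', he2', hne', hcomm'⟩
    have hs1 : h₀ a ≤ h₀ b := hs1'
    have hs2 : h₀ c ≤ h₀ d := hs2'
    have he1 : Sym2.mk.uncurry (a, b) ∈ G.edgeSet := he1'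
    have he2 : Sym2.mk.uncurry (c, d) ∈ G.edgeSet := he2'
    have hne : (a, b) ≠ (c, d) := hne'
    have hcomm : a = c ∨ a = d ∨ b = c ∨ b = d := hcomm'
    have hmkne : Sym2.mk.uncurry (a, b) ≠ Sym2.mk.uncurry (c, d) := by
      intro hmk
      have : (a = c ∧ b = d) ∨ (a = d ∧ b = c) := Sym2.eq_iff.mp hmk
      rcases this with ⟨h1, h2⟩ | ⟨h1, h2⟩
      · exact hne (by rw [h1, h2])
      · rw [h1, h2] at hs1
        exact (edge_ne (c, d) he2) (hh₀.injective (le_antisymm hs2 hs1))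
    obtain ⟨v, hv1, hv2⟩ : ∃ v : V, v ∈ Sym2.mk.uncurry (a, b) ∧ v ∈ Sym2.mk.uncurry (c, d) := by
      rcases hcomm with h | h | h | h
      · exact ⟨a, Sym2.mem_mk_left a b, by rw [show a = c from h]; exact Sym2.mem_mk_left c d⟩
      · exact ⟨a, Sym2.mem_mk_left a b, by rw [show a = d from h]; exact Sym2.mem_mk_right c d⟩
      · exact ⟨b, Sym2.mem_mk_right a b, by rw [show b = c from h]; exact Sym2.mem_mk_left c d⟩
      · exact ⟨b, Sym2.mem_mk_right a b, by rw [show b = d from h]; exact Sym2.mem_mk_right c d⟩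
    exact ⟨he1, he2, hmkne, v, ⟨hv1, hv2⟩,
      fun w hw => common_unique hmkne hw.1 hw.2 hv1 hv2⟩
  have hA_of_adj : ∀ e f : Sym2 V, (lineGraph G).Adj e f → (σ e, σ f) ∈ A := by
    intro e f hadj
    obtain ⟨he, hf, hne, hexu⟩ := hadj
    obtain ⟨v, ⟨hv1, hv2⟩, -⟩ := hexu
    refine ⟨sortedσ e, sortedσ f, by rw [mkσ]; exact he, by rw [mkσ]; exact hf, ?_, ?_⟩
    · intro hσef
      have hσef' : σ e = σ f := hσef
      exact hne (by rw [← mkσ e, ← mkσ f, hσef'])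
    · rcases (memσ v e).mp hv1 with h1 | h1 <;> rcases (memσ v f).mp hv2 with h2 | h2
      · exact Or.inl (h1 ▸ h2 ▸ rfl)
      · exact Or.inr (Or.inl (h1 ▸ h2 ▸ rfl))
      · exact Or.inr (Or.inr (Or.inl (h1 ▸ h2 ▸ rfl)))
      · exact Or.inr (Or.inr (Or.inr (h1 ▸ h2 ▸ rfl)))
  have hsecA : ∀ p : V × V, ∃ F : Finset (V × V), {q | (p, q) ∈ A} ⊆ ↑F ∧ F.card ≤ 2 * Δ := by
    intro p
    by_cases hpE : Sym2.mk.uncurry p ∈ G.edgeSet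
    · obtain ⟨sa, hsa, hsac⟩ := hdeg p.1
      obtain ⟨sb, hsb, hsbc⟩ := hdeg p.2
      refine ⟨sa.image (fun w => σ (Sym2.mk.uncurry (p.1, w))) ∪
        sb.image (fun w => σ (Sym2.mk.uncurry (p.2, w))), ?_, ?_⟩
      · rintro ⟨c, d⟩ hq
        obtain ⟨-, hs2', -, he2', -, hcomm'⟩ := hq
        have hs2 : h₀ c ≤ h₀ d := hs2'
        have he2 : Sym2.mk.uncurry (c, d) ∈ G.edgeSet := he2'
        have hcomm : p.1 = c ∨ p.1 = d ∨ p.2 = c ∨ p.2 = d := hcomm'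
        have hqsort : σ (Sym2.mk.uncurry (c, d)) = (c, d) := σsorted (c, d) hs2
        have hadjcd : G.Adj c d := G.mem_edgeSet.mp he2
        have hswap : Sym2.mk.uncurry (d, c) = Sym2.mk.uncurry (c, d) := Sym2.eq_swap
        rw [Finset.coe_union, Set.mem_union]
        rcases hcomm with h | h | h | h
        · left
          rw [Finset.coe_image]
          refine ⟨d, ?_, ?_⟩
          · have hmem : d ∈ G.neighborSet p.1 := (G.mem_neighborSet _ _).mpr (by rw [h]; exact hadjcd)
            rw [← hsa] at hmem
            exact hmem
          · show σ (Sym2.mk.uncurry (p.1, d)) = (c, d)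
            rw [h]; exact hqsort
        · left
          rw [Finset.coe_image]
          refine ⟨c, ?_, ?_⟩
          · have hmem : c ∈ G.neighborSet p.1 := (G.mem_neighborSet _ _).mpr (by rw [h]; exact hadjcd.symm)
            rw [← hsa] at hmem
            exact hmem
          · show σ (Sym2.mk.uncurry (p.1, c)) = (c, d)
            rw [h, hswap]; exact hqsort
        · right
          rw [Finset.coe_image]
          refine ⟨d, ?_, ?_⟩
          · have hmem : d ∈ G.neighborSet p.2 := (G.mem_neighborSet _ _).mpr (by rw [h]; exact hadjcd)
            rw [← hsb] at hmem
            exact hmem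
          · show σ (Sym2.mk.uncurry (p.2, d)) = (c, d)
            rw [h]; exact hqsort
        · right
          rw [Finset.coe_image]
          refine ⟨c, ?_, ?_⟩
          · have hmem : c ∈ G.neighborSet p.2 := (G.mem_neighborSet _ _).mpr (by rw [h]; exact hadjcd.symm)
            rw [← hsb] at hmem
            exact hmem
          · show σ (Sym2.mk.uncurry (p.2, c)) = (c, d)
            rw [h, hswap]; exact hqsort
      · calc (sa.image (fun w => σ (Sym2.mk.uncurry (p.1, w))) ∪
            sb.image (fun w => σ (Sym2.mk.uncurry (p.2, w)))).card
            ≤ (sa.image (fun w => σ (Sym2.mk.uncurry (p.1, w)))).card +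
              (sb.image (fun w => σ (Sym2.mk.uncurry (p.2, w)))).card := Finset.card_union_le _ _
          _ ≤ sa.card + sb.card := Nat.add_le_add Finset.card_image_le Finset.card_image_le
          _ ≤ 2 * Δ := by omega
    · refine ⟨∅, ?_, by simp⟩
      rintro q hq
      exact absurd hq.2.2.1 hpE
  obtain ⟨dom₀, g₀, hdm, hgm, hcompat, hcomplete⟩ := unif hX hhX.measurable hhX.injective
    (2 * Δ) A hAmeas hsecA
  refine ⟨⟨hX ∘ σ, hhX.measurable.comp σmeas, hhX.injective.comp σinj,
    fun i => σ ⁻¹' (dom₀ i), fun i e => Sym2.mk.uncurry (g₀ i (σ e)),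
    fun i => σmeas (hdm i), fun i => measurable_quot_mk.comp ((hgm i).comp σmeas),
    ?_, ?_⟩⟩
  · intro i e he
    have := hcompat i (σ e) he
    have h2 := hA_adj (σ e) (g₀ i (σ e)) this
    rwa [mkσ] at h2
  · intro e f hadj
    obtain ⟨i, hi1, hi2⟩ := hcomplete (σ e) (σ f) (hA_of_adj e f hadj)
    refine ⟨i, hi1, ?_⟩
    show Sym2.mk.uncurry (g₀ i (σ e)) = f
    rw [hi2, mkσ]

end Bridge


namespace NbrSys
variable {V : Type} [MeasurableSpace V] {G : SimpleGraph V} {M : ℕ}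

def piece (S : NbrSys V G M) : List (Fin M × Fin M) → Set (Sym2 V)
  | [] => Set.univ
  | ir :: t => {e | e ∈ S.dom ir.1 ∧ S.nbr ir.1 e ∈ S.dom ir.2 ∧
      S.nbr ir.2 (S.nbr ir.1 e) = e ∧ S.nbr ir.1 e ∈ S.piece t}

def wmap (S : NbrSys V G M) : List (Fin M × Fin M) → Sym2 V → Sym2 V
  | [] => id
  | ir :: t => S.wmap t ∘ S.nbr ir.1

lemma meas_eqSet (S : NbrSys V G M) {α : Type} [MeasurableSpace α] {f g : α → Sym2 V}
    (hf : Measurable f) (hg : Measurable g) : MeasurableSet {x | f x = g x} := by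
  have : {x | f x = g x} =
      {x | S.emb (f x) ≤ S.emb (g x)} ∩ {x | S.emb (g x) ≤ S.emb (f x)} := by
    ext x
    simp only [Set.mem_setOf_eq, Set.mem_inter_iff]
    constructor
    · rintro h; rw [h]; exact ⟨le_refl _, le_refl _⟩
    · rintro ⟨h1, h2⟩; exact S.inj_emb (le_antisymm h1 h2)
  rw [this]
  exact (measurableSet_le (S.meas_emb.comp hf) (S.meas_emb.comp hg)).inter
    (measurableSet_le (S.meas_emb.comp hg) (S.meas_emb.comp hf))

lemma wmap_meas (S : NbrSys V G M) : ∀ a, Measurable (S.wmap a)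
  | [] => measurable_id
  | _ir :: t => (S.wmap_meas t).comp (S.meas_nbr _)

lemma piece_meas (S : NbrSys V G M) : ∀ a, MeasurableSet (S.piece a)
  | [] => MeasurableSet.univ
  | ir :: t => by
    have : S.piece (ir :: t) = S.dom ir.1 ∩ ((S.nbr ir.1) ⁻¹' (S.dom ir.2)) ∩
        {e | S.nbr ir.2 (S.nbr ir.1 e) = e} ∩ ((S.nbr ir.1) ⁻¹' (S.piece t)) := by
      ext e
      simp only [piece, Set.mem_setOf_eq, Set.mem_inter_iff, Set.mem_preimage]
      tauto
    rw [this]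
    exact (((S.meas_dom ir.1).inter ((S.meas_nbr ir.1) (S.meas_dom ir.2))).inter
      (S.meas_eqSet ((S.meas_nbr ir.2).comp (S.meas_nbr ir.1)) measurable_id)).inter
      ((S.meas_nbr ir.1) (S.piece_meas t))

lemma piece_cons_sub (S : NbrSys V G M) (ir : Fin M × Fin M) (t : List (Fin M × Fin M)) :
    ∀ e ∈ S.piece (ir :: t), S.nbr ir.1 e ∈ S.piece t := fun _ he => he.2.2.2

lemma wmap_inj (S : NbrSys V G M) : ∀ a, Set.InjOn (S.wmap a) (S.piece a)
  | [] => fun _x _ _y _ h => h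
  | ir :: t => by
    intro x hx y hy hxy
    have h1 : S.wmap t (S.nbr ir.1 x) = S.wmap t (S.nbr ir.1 y) := hxy
    have h2 : S.nbr ir.1 x = S.nbr ir.1 y :=
      S.wmap_inj t hx.2.2.2 hy.2.2.2 h1
    calc x = S.nbr ir.2 (S.nbr ir.1 x) := hx.2.2.1.symm
    _ = S.nbr ir.2 (S.nbr ir.1 y) := by rw [h2]
    _ = y := hy.2.2.1

lemma wmap_reach (S : NbrSys V G M) : ∀ a, ∀ e ∈ S.piece a,
    (lineGraph G).Reachable e (S.wmap a e)
  | [] => fun e _ => SimpleGraph.Reachable.refl e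
  | ir :: t => fun e he =>
    ((S.adj ir.1 e he.1).reachable).trans (S.wmap_reach t (S.nbr ir.1 e) he.2.2.2)

lemma cover (S : NbrSys V G M) : ∀ (n : ℕ) (g : ℕ → Sym2 V),
    (∀ j < n, (lineGraph G).Adj (g j) (g (j + 1))) →
    ∃ a : List (Fin M × Fin M), a.length = n ∧ g 0 ∈ S.piece a ∧ S.wmap a (g 0) = g n := by
  intro n
  induction n with
  | zero => intro g _; exact ⟨[], rfl, Set.mem_univ _, rfl⟩
  | succ n IH =>
    intro g hg
    have h01 : (lineGraph G).Adj (g 0) (g 1) := hg 0 (Nat.succ_pos n)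
    obtain ⟨i, hi1, hi2⟩ := S.complete (g 0) (g 1) h01
    obtain ⟨r, hr1, hr2⟩ := S.complete (g 1) (g 0) h01.symm
    obtain ⟨a, ha1, ha2, ha3⟩ := IH (fun j => g (j + 1)) (fun j hj => hg (j + 1) (by omega))
    refine ⟨(i, r) :: a, by simp [ha1], ?_, ?_⟩
    · refine ⟨hi1, ?_, ?_, ?_⟩
      · rw [hi2]; exact hr1
      · rw [hi2]; exact hr2
      · rw [hi2]; exact ha2
    · show S.wmap a (S.nbr i (g 0)) = g (n + 1)
      rw [hi2]; exact ha3

lemma upper (S : NbrSys V G M) (ν : Measure (Sym2 V)) {ρ : Sym2 V → Sym2 V → ℝ≥0∞}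
    (hρ : IsRNCocycle (lineGraph G).Reachable ν ρ) {κ : ℝ≥0∞}
    (hbound : ∀ e f, (lineGraph G).Adj e f → ρ e f ≤ κ) :
    ∀ (a : List (Fin M × Fin M)) (D : Set (Sym2 V)), D ⊆ S.piece a →
      ν (S.wmap a '' D) ≤ κ ^ a.length * ν D := by
  intro a
  induction a with
  | nil => intro D _; simp [wmap, Set.image_id]
  | cons ir t IH =>
    intro D hD
    set C := toMeasurable ν D ∩ (S.dom ir.1 ∩ ((S.nbr ir.1) ⁻¹' (S.dom ir.2)) ∩
      {e | S.nbr ir.2 (S.nbr ir.1 e) = e}) with hC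
    have hCmeas : MeasurableSet C :=
      (measurableSet_toMeasurable ν D).inter
        (((S.meas_dom ir.1).inter ((S.meas_nbr ir.1) (S.meas_dom ir.2))).inter
          (S.meas_eqSet ((S.meas_nbr ir.2).comp (S.meas_nbr ir.1)) measurable_id))
    have hDC : D ⊆ C := fun e he =>
      ⟨subset_toMeasurable ν D he, ⟨(hD he).1, (hD he).2.1⟩, (hD he).2.2.1⟩
    have hinjC : Set.InjOn (S.nbr ir.1) C := by
      intro x hx y hy hxy
      calc x = S.nbr ir.2 (S.nbr ir.1 x) := hx.2.2.symm
      _ = S.nbr ir.2 (S.nbr ir.1 y) := by rw [hxy]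
      _ = y := hy.2.2
    have hgraph : ∀ x ∈ C, (lineGraph G).Reachable x (S.nbr ir.1 x) :=
      fun x hx => (S.adj ir.1 x hx.2.1.1).reachable
    have hstep : ν (S.nbr ir.1 '' C) ≤ κ * ν C := by
      rw [hρ.2.2 C (S.nbr ir.1) hCmeas (S.meas_nbr ir.1) hinjC hgraph]
      calc ∫⁻ x in C, ρ x (S.nbr ir.1 x) ∂ν
          ≤ ∫⁻ _x in C, κ ∂ν :=
            setLIntegral_mono' hCmeas (fun x hx => hbound _ _ (S.adj ir.1 x hx.2.1.1))
        _ = κ * ν C := setLIntegral_const C κ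
    have hCD : ν C ≤ ν D := by
      calc ν C ≤ ν (toMeasurable ν D) := measure_mono Set.inter_subset_left
      _ = ν D := measure_toMeasurable D
    have himg : S.wmap (ir :: t) '' D = S.wmap t '' (S.nbr ir.1 '' D) := by
      rw [show S.wmap (ir :: t) = S.wmap t ∘ S.nbr ir.1 from rfl, Set.image_comp]
    calc ν (S.wmap (ir :: t) '' D) = ν (S.wmap t '' (S.nbr ir.1 '' D)) := by rw [himg]
    _ ≤ κ ^ t.length * ν (S.nbr ir.1 '' D) := IH _ (by
        rintro f ⟨e, he, rfl⟩
        exact (hD he).2.2.2)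
    _ ≤ κ ^ t.length * ν (S.nbr ir.1 '' C) :=
        mul_le_mul_right (measure_mono (Set.image_mono hDC)) _
    _ ≤ κ ^ t.length * (κ * ν C) := mul_le_mul_right hstep _
    _ ≤ κ ^ t.length * (κ * ν D) := mul_le_mul_right (mul_le_mul_right hCD _) _
    _ = κ ^ (t.length + 1) * ν D := by rw [pow_succ, mul_assoc]
    _ = κ ^ (ir :: t).length * ν D := by rfl

lemma piece_null (S : NbrSys V G M) (ν : Measure (Sym2 V)) [IsFiniteMeasure ν]
    {ρ : Sym2 V → Sym2 V → ℝ≥0∞}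
    (hρ : IsRNCocycle (lineGraph G).Reachable ν ρ) {κ : ℝ≥0∞} (hκ2 : 2 ≤ κ) (hκtop : κ ≠ ⊤)
    (hbound : ∀ e f, (lineGraph G).Adj e f → ρ e f ≤ κ) (a : List (Fin M × Fin M)) :
    ν {e | e ∈ S.piece a ∧ κ ^ (a.length + 1) < ρ e (S.wmap a e)} = 0 := by
  set n := a.length with hn
  set B := {e | e ∈ S.piece a ∧ κ ^ (n + 1) < ρ e (S.wmap a e)} with hB
  have hρm : Measurable fun e => ρ e (S.wmap a e) :=
    hρ.1.comp (measurable_id.prodMk (S.wmap_meas a))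
  have hBmeas : MeasurableSet B := by
    have : B = S.piece a ∩ (fun e => ρ e (S.wmap a e)) ⁻¹' (Set.Ioi (κ ^ (n + 1))) := by
      ext e; simp [hB, Set.mem_setOf_eq, Set.mem_inter_iff]
    rw [this]
    exact (S.piece_meas a).inter (hρm measurableSet_Ioi)
  have hκ0 : κ ≠ 0 := by
    intro h; rw [h] at hκ2; exact absurd hκ2 (by simp)
  have hlow : κ ^ (n + 1) * ν B ≤ ν (S.wmap a '' B) := by
    rw [hρ.2.2 B (S.wmap a) hBmeas (S.wmap_meas a) ((S.wmap_inj a).mono (fun x hx => hx.1))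
      (fun x hx => S.wmap_reach a x hx.1)]
    calc κ ^ (n + 1) * ν B = ∫⁻ _x in B, κ ^ (n + 1) ∂ν := (setLIntegral_const B _).symm
    _ ≤ ∫⁻ x in B, ρ x (S.wmap a x) ∂ν := setLIntegral_mono' hBmeas (fun x hx => (hx.2).le)
  have hup : ν (S.wmap a '' B) ≤ κ ^ n * ν B :=
    S.upper ν hρ hbound a B (fun x hx => hx.1)
  have hcomb : κ * (κ ^ n * ν B) ≤ 1 * (κ ^ n * ν B) := by
    rw [one_mul, ← mul_assoc, ← pow_succ']
    exact le_trans hlow hup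
  by_contra hB0
  have hBt : ν B ≠ ⊤ := measure_ne_top ν B
  have hx0 : κ ^ n * ν B ≠ 0 := mul_ne_zero (pow_ne_zero n hκ0) hB0
  have hxt : κ ^ n * ν B ≠ ⊤ := ENNReal.mul_ne_top (ENNReal.pow_ne_top hκtop) hBt
  have : κ ≤ 1 := (ENNReal.mul_le_mul_iff_left hx0 hxt).mp hcomb
  exact absurd this (by
    intro h
    have : (2 : ℝ≥0∞) ≤ 1 := le_trans hκ2 h
    norm_num at this)

end NbrSys


/-- If `c` admits no improvement of weight `L` (with cocycle bounded by `8Δ` on adjacent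
edges) and `log_{8Δ}(L)/2 - 1 ≥ 2Δ`, then `ν`-almost every uncolored edge is
`(log_{8Δ}(L)/4)`-bad: every 3-step Vizing chain at it has length at least
`log_{8Δ}(L)/2 + 2Δ`. -/
theorem ae_bad_edges {V : Type} [MeasurableSpace V] [StandardBorelSpace V]
    (Δ : ℕ) (G : SimpleGraph V) (hE : MeasurableSet G.edgeSet) (hdeg : DegreeBounded G Δ)
    (ν : Measure (Sym2 V)) [IsProbabilityMeasure ν] (hνE : ν G.edgeSetᶜ = 0)
    (hqi : QuasiInvariant (lineGraph G) ν)
    (ρ : Sym2 V → Sym2 V → ℝ≥0∞)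
    (hρ : IsRNCocycle (lineGraph G).Reachable ν ρ)
    (hρbound : ∀ e f : Sym2 V, (lineGraph G).Adj e f → ρ e f ≤ (8 * Δ : ℝ≥0∞))
    (c : Sym2 V → Option (Fin (Δ + 1)))
    (hc : IsPartialColoring G Δ c) (hcm : MeasurableColoring c)
    (L : ℕ) (hL : (2 * Δ : ℝ) ≤ Real.logb (8 * Δ) L / 2 - 1)
    (himp : NoImprovement G Δ ν ρ c L) :
    ν {e : Sym2 V | e ∈ G.edgeSet ∧ c e = none ∧
        ¬ ∀ W : EChain V, IsVizingChain3 G Δ c e W →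
          ∀ n : ℕ, (n : ℝ) < Real.logb (8 * Δ) L / 2 + 2 * Δ → (W.seq n).isSome} = 0 := by
  classical
  -- basic arithmetic consequences
  have hΔ1 : 1 ≤ Δ := by
    by_contra hΔ
    have hΔ0 : Δ = 0 := by omega
    subst hΔ0
    simp only [Nat.cast_zero, mul_zero, Real.logb, Real.log_zero, div_zero, zero_div] at hL
    norm_num at hL
  have hL1 : 1 ≤ L := by
    by_contra hL0
    have hL00 : L = 0 := by omega
    subst hL00
    simp only [Nat.cast_zero, Real.logb_zero, zero_div] at hL
    have h0 : (0:ℝ) ≤ 2 * (Δ:ℝ) := by positivity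
    linarith
  have hbΔ : (8:ℝ) ≤ 8 * (Δ:ℝ) := by
    have : (1:ℝ) ≤ (Δ:ℝ) := by exact_mod_cast hΔ1
    nlinarith
  have hLpos : (0:ℝ) < (L:ℝ) := by exact_mod_cast hL1
  set κ : ℝ≥0∞ := (8 * Δ : ℝ≥0∞) with hκdef
  have hκ2 : (2:ℝ≥0∞) ≤ κ := by
    rw [hκdef]
    calc (2:ℝ≥0∞) ≤ 8 := by norm_num
    _ = 8 * 1 := (mul_one _).symm
    _ ≤ 8 * (Δ:ℝ≥0∞) := by
        apply mul_le_mul_right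
        exact_mod_cast hΔ1
  have hκtop : κ ≠ ⊤ := by
    rw [hκdef]
    exact ENNReal.mul_ne_top (by norm_num) (ENNReal.natCast_ne_top Δ)
  obtain ⟨S⟩ := exists_nbrSys Δ G hE hdeg
  have hnull : ∀ a : List (Fin (2*Δ) × Fin (2*Δ)),
      ν {e | e ∈ S.piece a ∧ κ ^ (a.length + 1) < ρ e (S.wmap a e)} = 0 :=
    fun a => S.piece_null ν hρ hκ2 hκtop hρbound a
  have hBad0 : ν (⋃ a : List (Fin (2*Δ) × Fin (2*Δ)),
      {e | e ∈ S.piece a ∧ κ ^ (a.length + 1) < ρ e (S.wmap a e)}) = 0 :=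
    measure_iUnion_null hnull
  have himp' : ν {e | e ∈ G.edgeSet ∧ c e = none ∧
      ∃ W, IsVizingChain3 G Δ c e W ∧ chainWeight ρ e W ≤ (L : ℝ≥0∞)} = 0 := himp
  refine measure_mono_null ?_ (measure_union_null himp' hBad0)
  rintro e ⟨heE, hce, hnot⟩
  push_neg at hnot
  obtain ⟨W, hWch, n₀, hn₀lt, hn₀⟩ := hnot
  replace hn₀ : W.seq n₀ = none := Option.not_isSome_iff_eq_none.mp (by simpa using hn₀)
  by_cases himpW : chainWeight ρ e W ≤ (L : ℝ≥0∞)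
  · exact Or.inl ⟨heE, hce, W, hWch, himpW⟩
  · refine Or.inr ?_
    push_neg at himpW
    obtain ⟨y₁, y₂, y₃, z₁, z₂, z₃, α₁, β₁, α₂, β₂, α₃, β₃, F1, P1, F2, P2, F3, P3, hd, hWeq⟩ :=
      hWch
    have hW0 : W.seq 0 = some e := by rw [hWeq]; exact hd.firstEdge
    have hshift : IsShiftable G Δ c W := by rw [hWeq]; exact hd.aug.1.1
    have hex : ∃ m, W.seq m = none := ⟨n₀, hn₀⟩
    set k := Nat.find hex with hkdef
    have hkn : W.seq k = none := Nat.find_spec hex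
    have hklt : ∀ m < k, (W.seq m).isSome := by
      intro m hm
      exact Option.ne_none_iff_isSome.mp (Nat.find_min hex hm)
    have hkle : k ≤ n₀ := Nat.find_min' hex hn₀
    have hkb : (k:ℝ) < Real.logb (8 * Δ) L / 2 + 2 * Δ :=
      lt_of_le_of_lt (by exact_mod_cast hkle) hn₀lt
    set f : ℕ → Sym2 V := fun m => (W.seq m).getD e with hfdef
    have hfs : ∀ m < k, W.seq m = some (f m) := by
      intro m hm
      rcases ho : W.seq m with _ | x
      · have := hklt m hm
        rw [ho] at this
        simp at this
      · simp [hfdef, ho]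
    have hk0 : 0 < k := by
      rcases Nat.eq_zero_or_pos k with h0 | h
      · rw [h0] at hkn
        rw [hkn] at hW0
        exact absurd hW0 (by simp)
      · exact h
    have hf0 : f 0 = e := by
      have h := hfs 0 hk0
      rw [hW0] at h
      exact (Option.some_injective _ h).symm
    have hnone : ∀ m, k ≤ m → W.seq m = none := by
      intro m
      induction m with
      | zero => intro hm; rw [Nat.le_zero.mp hm] at hkn; exact hkn
      | succ m IH =>
        intro hm
        by_cases h : k ≤ m
        · exact W.closed m (IH h)
        · have : k = m + 1 := by omega
          rw [← this]; exact hkn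
    have hweight : chainWeight ρ e W = ∑ n ∈ Finset.range k, ρ e (f n) := by
      rw [chainWeight, tsum_eq_sum (s := Finset.range k) ?_]
      · refine Finset.sum_congr rfl (fun n hn => ?_)
        rw [hfs n (Finset.mem_range.mp hn)]
        rfl
      · intro n hn
        rw [hnone n (by simpa using hn)]
        rfl
    have hgeo : ∀ m : ℕ, (∑ n ∈ Finset.range m, κ ^ (n+1)) ≤ κ ^ (m+1) := by
      intro m
      induction m with
      | zero => simp
      | succ m IH =>
        rw [Finset.sum_range_succ]
        calc (∑ n ∈ Finset.range m, κ ^ (n+1)) + κ ^ (m+1)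
            ≤ κ ^ (m+1) + κ ^ (m+1) := add_le_add_left IH _
        _ = 2 * κ ^ (m+1) := (two_mul _).symm
        _ ≤ κ * κ ^ (m+1) := mul_le_mul_left hκ2 _
        _ = κ ^ (m+2) := (pow_succ' κ (m+1)).symm
    have hcast : κ ^ (k+1) ≤ (L : ℝ≥0∞) := by
      have h1 : ((k:ℝ)+1) ≤ Real.logb (8 * Δ) L := by linarith
      have h2 : (8 * (Δ:ℝ)) ^ (k+1) ≤ (L:ℝ) := by
        calc (8 * (Δ:ℝ)) ^ (k+1) = (8 * (Δ:ℝ)) ^ ((k+1 : ℕ) : ℝ) :=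
            (Real.rpow_natCast _ (k+1)).symm
        _ ≤ (8 * (Δ:ℝ)) ^ Real.logb (8 * Δ) L := by
            apply Real.rpow_le_rpow_of_exponent_le (by linarith)
            push_cast
            linarith
        _ = L := Real.rpow_logb (by linarith) (by linarith) hLpos
      have h3 : (8 * Δ) ^ (k+1) ≤ L := by
        have := h2
        push_cast at this
        exact_mod_cast this
      have hre : κ ^ (k+1) = (((8 * Δ) ^ (k+1) : ℕ) : ℝ≥0∞) := by
        rw [hκdef]; push_cast; ring
      rw [hre]
      exact_mod_cast h3
    have hpig : ∃ n, n < k ∧ κ ^ (n+1) < ρ e (f n) := by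
      by_contra hcon
      push_neg at hcon
      have hsum : (∑ n ∈ Finset.range k, ρ e (f n)) ≤ ∑ n ∈ Finset.range k, κ ^ (n+1) :=
        Finset.sum_le_sum (fun n hn => hcon n (Finset.mem_range.mp hn))
      have : chainWeight ρ e W ≤ (L:ℝ≥0∞) := by
        rw [hweight]
        exact le_trans hsum (le_trans (hgeo k) hcast)
      exact absurd this (not_le.mpr himpW)
    obtain ⟨n, hnk, hρn⟩ := hpig
    have hadj : ∀ j < n, (lineGraph G).Adj (f j) (f (j+1)) := by
      intro j hj
      have hj1 : j < k := by omega
      have hj2 : j + 1 < k := by omega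
      have h1 := hfs j hj1
      have h2 := hfs (j+1) hj2
      obtain ⟨v, hv1, hv2⟩ := hshift.chain j (f j) (f (j+1)) h1 h2
      have hne : f j ≠ f (j+1) := by
        intro hfe
        have h2' : W.seq (j+1) = some (f j) := by rw [hfe]; exact h2
        have := hshift.inj j (j+1) (f j) h1 h2'
        omega
      exact ⟨hshift.edges j _ h1, hshift.edges (j+1) _ h2, hne, v, ⟨hv1, hv2⟩,
        fun w hw => common_unique hne hw.1 hw.2 hv1 hv2⟩
    obtain ⟨a, halen, hapiece, hawmap⟩ := S.cover n f hadj
    rw [hf0] at hapiece hawmap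
    refine Set.mem_iUnion.mpr ⟨a, hapiece, ?_⟩
    rw [halen, hawmap]
    exact hρn
end

section
/- Let c be a partial coloring of a graph 𝒢 with maximum degree Δ, and let R = (F¹)⌢(P¹)⌢(F²) be a c-proper-shiftable chain where F¹ is a prefix of a maximal fan F_c(y₁,e) at an uncolored edge e, P¹ is a prefix of an alternating path P_c(z₁,α₁/β₁), and F² is a prefix of a maximal conditional fan F_c(z₁,α₁/β₁,y₂) whose last edge is {y₂,z₂}. Let P_c(z₂,α₂/β₂) be an alternating path starting at z₂, and let f² ∈ P_c(z₂,α₂/β₂) be 2-suitable, i.e.: f² has graph distance at least 3 from every edge of R, f² is not the last edge of P_c(z₂,α₂/β₂), and c(f²)=α₂. Set P² = P_c(z₂,α₂/β₂)_{i(f²)−1} (the prefix of the path ending just before f²), let y₃ be the last vertex of P_c(z₂,α₂/β₂)_{i(f²)}, and assume R⌢P² is c-proper-shiftable. Then the chain P = R⌢P²⌢F_c(z₂,α₂/β₂,y₃), where F_c(z₂,α₂/β₂,y₃) is the maximal α₂/β₂-conditional fan starting at f², is c-proper-shiftable. -/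
open MeasureTheory
open scoped ENNReal

namespace EChain

variable {V : Type}

-- ===== new lemmas =====

attribute [local instance] Classical.propDecidable

theorem ext' {P Q : EChain V} (h : P.seq = Q.seq) : P = Q := by
  cases P; cases Q; cases h; rfl

theorem seq_none_mono (P : EChain V) {m n : ℕ} (h : P.seq m = none) (hmn : m ≤ n) :
    P.seq n = none := by
  induction n with
  | zero => exact (Nat.le_zero.mp hmn) ▸ h
  | succ k ih =>
    rcases Nat.lt_or_ge m (k+1) with h1 | h1
    · exact P.closed k (ih (by omega))
    · have : m = k + 1 := by omega
      exact this ▸ h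

theorem isSome_of_le (P : EChain V) {m n : ℕ} (h : (P.seq n).isSome) (hmn : m ≤ n) :
    (P.seq m).isSome := by
  by_contra hno
  have : P.seq m = none := by
    cases hm : P.seq m with
    | none => rfl
    | some _ => exact absurd (by simp [hm]) hno
  rw [P.seq_none_mono this hmn] at h; simp at h

theorem lenEq_find (P : EChain V) (h : ∃ k, P.seq k = none) : P.lenEq (Nat.find h) := by
  refine ⟨Nat.find_spec h, fun n hn => ?_⟩
  have := Nat.find_min h hn
  cases hh : P.seq n with
  | none => exact absurd hh this
  | some _ => simp

theorem lenEq_unique {P : EChain V} {k l : ℕ} (hk : P.lenEq k) (hl : P.lenEq l) : k = l := by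
  by_contra hne
  rcases Nat.lt_or_ge k l with h | h
  · have := hl.2 k h; rw [hk.1] at this; simp at this
  · rcases Nat.lt_or_ge l k with h' | h'
    · have := hk.2 l h'; rw [hl.1] at this; simp at this
    · omega

theorem append_seq_of_lenEq {P : EChain V} {N : ℕ} (hP : P.lenEq N) (Q : EChain V) (n : ℕ) :
    (P.append Q).seq n = if n < N then P.seq n else Q.seq (n - N) := by
  have hex : ∃ k, P.seq k = none := ⟨N, hP.1⟩
  have hfind : Nat.find hex = N := lenEq_unique (P.lenEq_find hex) hP
  show (if h : ∃ k, P.seq k = none then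
      (if n < Nat.find h then P.seq n else Q.seq (n - Nat.find h)) else P.seq n) = _
  rw [dif_pos hex, hfind]

theorem append_of_infinite {P : EChain V} (h : ∀ n, (P.seq n).isSome) (Q : EChain V) :
    P.append Q = P := by
  apply ext'
  funext n
  have hex : ¬ ∃ k, P.seq k = none := by
    rintro ⟨k, hk⟩; have := h k; rw [hk] at this; simp at this
  show (if h : ∃ k, P.seq k = none then
      (if n < Nat.find h then P.seq n else Q.seq (n - Nat.find h)) else P.seq n) = _
  rw [dif_neg hex]

theorem lenEq_append {P Q : EChain V} {N M : ℕ} (hP : P.lenEq N) (hQ : Q.lenEq M) :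
    (P.append Q).lenEq (N + M) := by
  constructor
  · rw [append_seq_of_lenEq hP, if_neg (by omega)]
    rw [show N + M - N = M from by omega]; exact hQ.1
  · intro n hn
    rw [append_seq_of_lenEq hP]
    by_cases h : n < N
    · rw [if_pos h]; exact hP.2 n h
    · rw [if_neg h]; exact hQ.2 _ (by omega)

theorem take_seq (P : EChain V) (j n : ℕ) :
    (P.take j).seq n = if n < j then P.seq n else none := rfl

theorem shift_eq_of_some {Δ : ℕ} {P : EChain V} (hinj : P.EdgeInj)
    {c : Sym2 V → Option (Fin (Δ + 1))} {n : ℕ} {g : Sym2 V} (h : P.seq n = some g) :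
    P.shift c g = (P.seq (n + 1)).bind c := by
  have hex : ∃ m, P.seq m = some g := ⟨n, h⟩
  show (if h : ∃ m, P.seq m = some g then (P.seq (Nat.find h + 1)).bind c else c g) = _
  rw [dif_pos hex]
  have := hinj _ _ _ (Nat.find_spec hex) h
  rw [this]

theorem shift_eq_of_not_mem {Δ : ℕ} {P : EChain V}
    {c : Sym2 V → Option (Fin (Δ + 1))} {g : Sym2 V} (h : ¬ P.mem g) :
    P.shift c g = c g := by
  show (if h : ∃ m, P.seq m = some g then (P.seq (Nat.find h + 1)).bind c else c g) = _
  rw [dif_neg (by exact h)]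


end EChain

-- ===== Sym2 / graph lemmas =====

theorem edge_other {V : Type} {G : SimpleGraph V} {e : Sym2 V} (he : e ∈ G.edgeSet)
    {x : V} (hx : x ∈ e) : ∃ y, e = s(x, y) ∧ x ≠ y := by
  induction e with
  | _ a b =>
    have hab : G.Adj a b := he
    rcases Sym2.mem_iff.mp hx with rfl | rfl
    · exact ⟨b, rfl, hab.ne⟩
    · exact ⟨a, Sym2.eq_swap, hab.ne'⟩

theorem edge_eq_of_two {V : Type} {e f : Sym2 V} {u v : V} (huv : u ≠ v)
    (hu : u ∈ e) (hv : v ∈ e) (hu' : u ∈ f) (hv' : v ∈ f) : e = f := by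
  induction e with
  | _ a b =>
    induction f with
    | _ a' b' =>
      rw [Sym2.mem_iff] at hu hv hu' hv'
      rcases hu with rfl | rfl <;> rcases hv with hv | hv <;>
        rcases hu' with hu' | hu' <;> rcases hv' with hv' | hv' <;>
        subst_vars <;>
        first | rfl | exact absurd rfl huv | exact Sym2.eq_swap

theorem adj_line {V : Type} {G : SimpleGraph V} {e f : Sym2 V} (he : e ∈ G.edgeSet)
    (hf : f ∈ G.edgeSet) (hne : e ≠ f) {v : V} (hv : v ∈ e) (hv' : v ∈ f) :
    (lineGraph G).Adj e f := by
  refine ⟨he, hf, hne, v, ⟨hv, hv'⟩, ?_⟩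
  rintro w ⟨hw, hw'⟩
  by_contra hwv
  exact hne (edge_eq_of_two hwv hw hv hw' hv')


/-- If `g` and `f` are connected through a middle edge `h` (sharing vertices), they are
at distance at most 2, contradicting `edgeDistGE _ _ _ 3`. -/
theorem not_distGE3 {V : Type} {G : SimpleGraph V} {g h f : Sym2 V}
    (hg : g ∈ G.edgeSet) (hh : h ∈ G.edgeSet) (hf : f ∈ G.edgeSet)
    {v w : V} (hv1 : v ∈ g) (hv2 : v ∈ h) (hw1 : w ∈ h) (hw2 : w ∈ f) :
    ¬ edgeDistGE G g f 3 := by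
  intro hd
  have key : ∀ (a b : Sym2 V), a ∈ G.edgeSet → b ∈ G.edgeSet → (∃ u, u ∈ a ∧ u ∈ b) →
      ∃ p : (lineGraph G).Walk a b, p.length ≤ 1 := by
    rintro a b ha hb ⟨u, hua, hub⟩
    by_cases hab : a = b
    · subst hab; exact ⟨SimpleGraph.Walk.nil, by simp⟩
    · exact ⟨(adj_line ha hb hab hua hub).toWalk, le_refl 1⟩
  obtain ⟨p1, hp1⟩ := key g h hg hh ⟨v, hv1, hv2⟩
  obtain ⟨p2, hp2⟩ := key h f hh hf ⟨w, hw1, hw2⟩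
  have hreach : (lineGraph G).Reachable g f := ⟨p1.append p2⟩
  have hdist : (lineGraph G).dist g f ≤ 2 := by
    have := SimpleGraph.dist_le (p1.append p2)
    rw [SimpleGraph.Walk.length_append] at this
    omega
  rcases hd with hd | hd
  · exact hd hreach
  · omega

/-- Proposition 3.4: attaching the maximal `α₂/β₂`-conditional fan at a `2`-suitable edge
`f²` of `P_c(z₂,α₂/β₂)` to the `c`-proper-shiftable chain `R⌢P²` yields a
`c`-proper-shiftable chain. -/
theorem two_suitable_proper_shiftable {V : Type} (Δ : ℕ) (G : SimpleGraph V)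
    (hdeg : DegreeBounded G Δ)
    (c : Sym2 V → Option (Fin (Δ + 1))) (hc : IsPartialColoring G Δ c)
    (e : Sym2 V) (he : e ∈ G.edgeSet) (hce : c e = none)
    (y₁ z₁ y₂ z₂ y₃ : V) (α₁ β₁ α₂ β₂ : Fin (Δ + 1))
    (F1 P1 F2 : EChain V)
    (hF1 : ∃ MF, IsMaxFan G c y₁ e MF ∧ F1.IsPrefix MF)
    (hP1 : ∃ Q, IsAltPath G c z₁ α₁ β₁ Q ∧ P1.IsPrefix Q)
    (hF2 : ∃ f MF, IsMaxCondFan G c α₁ β₁ y₂ f MF ∧ F2.IsPrefix MF)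
    (hF2last : ∃ n, F2.seq n = some s(y₂, z₂) ∧ F2.seq (n + 1) = none)
    (R : EChain V) (hR : R = F1.append (P1.append F2))
    (hRps : IsProperShiftable G Δ c R)
    (Q2 : EChain V) (hQ2 : IsAltPath G c z₂ α₂ β₂ Q2)
    (f₂ : Sym2 V) (j : ℕ) (hj : Q2.seq j = some f₂)
    (hsuit1 : ∀ g : Sym2 V, R.mem g → edgeDistGE G g f₂ 3)
    (hsuit2 : (Q2.seq (j + 1)).isSome)
    (hsuit3 : c f₂ = some α₂)
    (P2 : EChain V) (hP2 : P2 = Q2.take j)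
    (hy₃ : (Q2.take (j + 1)).IsLastVertexOf z₂ y₃)
    (hRP2 : IsProperShiftable G Δ c (R.append P2))
    (F3 : EChain V) (hF3 : IsMaxCondFan G c α₂ β₂ y₃ f₂ F3) :
    IsProperShiftable G Δ c (R.append (P2.append F3)) := by
  classical
  obtain ⟨hcE, hcP⟩ := hc
  by_cases hRfin : ∃ k, R.seq k = none
  case neg =>
    have hinf : ∀ n, (R.seq n).isSome := by
      intro n; cases h : R.seq n with
      | none => exact absurd ⟨n, h⟩ hRfin
      | some _ => simp
    rw [EChain.append_of_infinite hinf] at hRP2 ⊢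
    exact hRP2
  -- R is finite
  have inf_of : ∀ X : EChain V, (¬ ∃ k, X.seq k = none) → ∀ n, (X.seq n).isSome := by
    intro X h n; cases hh : X.seq n with
    | none => exact absurd ⟨n, hh⟩ h
    | some _ => simp
  set N := Nat.find hRfin with hNdef
  have hRlen : R.lenEq N := R.lenEq_find hRfin
  have hN1 : 1 ≤ N := by
    by_contra h
    obtain ⟨e', he', _⟩ := hRps.1.first
    have h0 : N = 0 := by omega
    rw [h0] at hRlen
    rw [hRlen.1] at he'
    exact nomatch he'
  -- F1, P1 finite; last edge of R
  have hF1fin : ∃ k, F1.seq k = none := by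
    by_contra h
    have hinf := inf_of F1 h
    have hh := hRlen.1
    rw [hR] at hh
    rw [EChain.append_of_infinite hinf] at hh
    exact h ⟨N, hh⟩
  set N1 := Nat.find hF1fin with hN1def
  have hF1len : F1.lenEq N1 := F1.lenEq_find hF1fin
  have hP1fin : ∃ k, P1.seq k = none := by
    by_contra h
    have hinf := inf_of P1 h
    have hh := hRlen.1
    rw [hR] at hh
    rw [EChain.append_of_infinite hinf (Q := F2)] at hh
    rw [EChain.append_seq_of_lenEq hF1len] at hh
    by_cases h1 : N < N1
    · rw [if_pos h1] at hh
      have := hF1len.2 N h1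
      rw [hh] at this; simp at this
    · rw [if_neg h1] at hh
      have := hinf (N - N1)
      rw [hh] at this; simp at this
  set N2 := Nat.find hP1fin with hN2def
  have hP1len : P1.lenEq N2 := P1.lenEq_find hP1fin
  obtain ⟨n₂, hn₂s, hn₂n⟩ := hF2last
  have hF2len : F2.lenEq (n₂ + 1) := by
    refine ⟨hn₂n, fun m hm => F2.isSome_of_le (by rw [hn₂s]; rfl) (by omega)⟩
  have hNsum : N = N1 + (N2 + (n₂ + 1)) := by
    have : R.lenEq (N1 + (N2 + (n₂ + 1))) := by
      rw [hR]
      exact EChain.lenEq_append hF1len (EChain.lenEq_append hP1len hF2len)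
    exact EChain.lenEq_unique hRlen this
  have hRlast : R.seq (N - 1) = some s(y₂, z₂) := by
    rw [hR, EChain.append_seq_of_lenEq hF1len, if_neg (by omega),
      EChain.append_seq_of_lenEq hP1len, if_neg (by omega)]
    rw [show N - 1 - N1 - N2 = n₂ from by omega]
    exact hn₂s
  have hRmemLast : R.mem s(y₂, z₂) := ⟨N - 1, hRlast⟩
  -- Q2 basics
  have hQ2some : ∀ n, n ≤ j + 1 → ∃ e', Q2.seq n = some e' := by
    intro n hn
    have := Q2.isSome_of_le hsuit2 hn
    exact Option.isSome_iff_exists.mp this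
  have hcolQ := hQ2.colors
  have hedQ := hQ2.edges
  have hf₂E : f₂ ∈ G.edgeSet := hedQ j f₂ hj
  have hαβ : α₂ ≠ β₂ := hQ2.ne
  have hjeven : j % 2 = 0 := by
    have := hcolQ j f₂ hj
    rw [hsuit3] at this
    by_contra h
    rw [if_neg (by omega)] at this
    exact hαβ (Option.some.inj this)
  have hnotR : ∀ g', R.mem g' → ∀ h', h' ∈ G.edgeSet → ∀ v w : V,
      v ∈ g' → v ∈ h' → w ∈ h' → w ∈ f₂ → False := by
    rintro g' hg' h' hh' v w hv1 hv2 hw1 hw2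
    obtain ⟨n, hn⟩ := hg'
    exact not_distGE3 (hRps.1.edges n g' hn) hh' hf₂E hv1 hv2 hw1 hw2 (hsuit1 g' ⟨n, hn⟩)
  have hj0 : j ≠ 0 := by
    intro h0
    subst h0
    have hz₂ : z₂ ∈ f₂ := hQ2.start f₂ hj
    exact hnotR s(y₂, z₂) hRmemLast f₂ hf₂E z₂ z₂ (by simp) hz₂ hz₂ hz₂
  have hj2 : 2 ≤ j := by omega
  -- lengths of P2, F3 and the full chain
  have hP2len : P2.lenEq j := by
    rw [hP2]
    constructor
    · rw [EChain.take_seq, if_neg (by omega)]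
    · intro n hn
      rw [EChain.take_seq, if_pos hn]
      exact Q2.isSome_of_le hsuit2 (by omega)
  have hF3fin := hF3.finite
  set K := Nat.find hF3fin with hKdef
  have hF3len : F3.lenEq K := F3.lenEq_find hF3fin
  have hK1 : 1 ≤ K := by
    by_contra h
    have h0 : K = 0 := by omega
    have := hF3len.1
    rw [h0, hF3.first] at this
    exact nomatch this
  set P := R.append (P2.append F3) with hPdef
  have hPFlen : (P2.append F3).lenEq (j + K) := EChain.lenEq_append hP2len hF3len
  have hPseq : ∀ n, P.seq n =
      if n < N then R.seq n
      else if n < N + j then Q2.seq (n - N)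
      else if n < N + j + K then F3.seq (n - N - j)
      else none := by
    intro n
    rw [hPdef, EChain.append_seq_of_lenEq hRlen, EChain.append_seq_of_lenEq hP2len]
    by_cases h1 : n < N
    · rw [if_pos h1, if_pos h1]
    · rw [if_neg h1, if_neg h1]
      by_cases h2 : n < N + j
      · rw [if_pos (by omega : n - N < j), if_pos h2, hP2, EChain.take_seq,
          if_pos (by omega : n - N < j)]
      · rw [if_neg (by omega : ¬ n - N < j), if_neg h2,
          show n - N - j = n - (N + j) from by omega]
        by_cases h3 : n < N + j + K
        · rw [if_pos h3, show n - (N + j) = n - (N + j) from rfl]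
        · rw [if_neg h3]
          exact F3.seq_none_mono hF3len.1 (by omega)
  have hRP2seq : ∀ n, (R.append P2).seq n =
      if n < N then R.seq n else if n < N + j then Q2.seq (n - N) else none := by
    intro n
    rw [EChain.append_seq_of_lenEq hRlen]
    by_cases h1 : n < N
    · rw [if_pos h1, if_pos h1]
    · rw [if_neg h1, if_neg h1]
      by_cases h2 : n < N + j
      · rw [if_pos h2, hP2, EChain.take_seq, if_pos (by omega : n - N < j)]
      · rw [if_neg h2, hP2, EChain.take_seq, if_neg (by omega : ¬ n - N < j)]

  -- three distinct path edges cannot share a vertex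
  have three_edges : ∀ (a b d : ℕ) (ea eb ed : Sym2 V) {v : V},
      a < b → b < d → Q2.seq a = some ea → Q2.seq b = some eb → Q2.seq d = some ed →
      v ∈ ea → v ∈ eb → v ∈ ed → False := by
    intro a b d ea eb ed v hab hbd ha hb hd hva hvb hvd
    have hpar : a % 2 = b % 2 ∨ a % 2 = d % 2 ∨ b % 2 = d % 2 := by omega
    have hcolab := hcolQ a ea ha
    have hcolbb := hcolQ b eb hb
    have hcoldd := hcolQ d ed hd
    have inj := hQ2.inj
    rcases hpar with h | h | h
    · have hne : ea ≠ eb := fun hEq => by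
        exact absurd (inj a b ea ha (hEq ▸ hb)) (by omega)
      exact hcP ea eb hne ⟨v, hva, hvb⟩ (by rw [hcolab]; rfl)
        (by rw [hcolab, hcolbb, h])
    · have hne : ea ≠ ed := fun hEq => by
        exact absurd (inj a d ea ha (hEq ▸ hd)) (by omega)
      exact hcP ea ed hne ⟨v, hva, hvd⟩ (by rw [hcolab]; rfl)
        (by rw [hcolab, hcoldd, h])
    · have hne : eb ≠ ed := fun hEq => by
        exact absurd (inj b d eb hb (hEq ▸ hd)) (by omega)
      exact hcP eb ed hne ⟨v, hvb, hvd⟩ (by rw [hcolbb]; rfl)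
        (by rw [hcolbb, hcoldd, h])
  -- dissect hy₃ : last vertex of Q2.take (j+1)
  obtain ⟨e0, he0⟩ := hQ2some 0 (by omega)
  have htk : ∀ n e', (Q2.take (j + 1)).seq n = some e' ↔ n ≤ j ∧ Q2.seq n = some e' := by
    intro n e'
    rw [EChain.take_seq]
    by_cases h : n < j + 1
    · rw [if_pos h]; exact ⟨fun hh => ⟨by omega, hh⟩, fun hh => hh.2⟩
    · rw [if_neg h]
      exact ⟨fun hh => (nomatch hh), fun hh => absurd hh.1 (by omega)⟩
  rcases hy₃ with ⟨hnone, _⟩ | ⟨_, hy3nz, ⟨m0, em0, hm0s, hy3m0⟩, huniq⟩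
  · rw [EChain.take_seq, if_pos (by omega), he0] at hnone
    exact absurd hnone (by simp)
  obtain ⟨hm0j, hm0Q⟩ := (htk m0 em0).mp hm0s
  have hy3unique : ∀ m, m ≤ j → ∀ e', Q2.seq m = some e' → y₃ ∈ e' → m = m0 := by
    intro m hm e' hme hye
    exact huniq m m0 e' em0 ((htk m e').mpr ⟨hm, hme⟩) hm0s hye hy3m0
  have hm0eq : m0 = j := by
    by_contra hne
    have hm0lt : m0 < j := by omega
    have hem0E : em0 ∈ G.edgeSet := hedQ m0 em0 hm0Q
    rcases Nat.eq_zero_or_pos m0 with h0 | hpos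
    · subst h0
      have hz2 : z₂ ∈ em0 := hQ2.start em0 hm0Q
      obtain ⟨t, hteq, htne⟩ := edge_other hem0E hz2
      have hy3t : y₃ = t := by
        rw [hteq] at hy3m0
        rcases Sym2.mem_iff.mp hy3m0 with h | h
        · exact absurd h hy3nz
        · exact h
      obtain ⟨e1, he1⟩ := hQ2some 1 (by omega)
      obtain ⟨v, hv0, hv1⟩ := hQ2.chain 0 em0 e1 hm0Q he1
      have hvy3 : v = y₃ := by
        rw [hteq] at hv0
        rcases Sym2.mem_iff.mp hv0 with h | h
        · exact absurd (h ▸ hv1) (hQ2.noback e1 he1)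
        · rw [h, hy3t]
      have h10 := hy3unique 1 (by omega) e1 he1 (hvy3 ▸ hv1)
      omega
    · obtain ⟨em1, hem1⟩ := hQ2some (m0 - 1) (by omega)
      obtain ⟨ep1, hep1⟩ := hQ2some (m0 + 1) (by omega)
      obtain ⟨t, hteq, htne⟩ := edge_other hem0E hy3m0
      obtain ⟨u, hu1, hu2⟩ := hQ2.chain (m0 - 1) em1 em0 hem1
        (by rw [show m0 - 1 + 1 = m0 from by omega]; exact hm0Q)
      obtain ⟨w, hw1, hw2⟩ := hQ2.chain m0 em0 ep1 hm0Q hep1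
      have hut : u = t := by
        rw [hteq] at hu2
        rcases Sym2.mem_iff.mp hu2 with h | h
        · exact absurd (hy3unique (m0 - 1) (by omega) em1 hem1 (h ▸ hu1)) (by omega)
        · exact h
      have hwt : w = t := by
        rw [hteq] at hw1
        rcases Sym2.mem_iff.mp hw1 with h | h
        · exact absurd (hy3unique (m0 + 1) (by omega) ep1 hep1 (h ▸ hw2)) (by omega)
        · exact h
      exact three_edges (m0 - 1) m0 (m0 + 1) em1 em0 ep1 (by omega) (by omega)
        hem1 hm0Q hep1 (hut ▸ hu1) (hteq ▸ (Sym2.mem_mk_right y₃ t : t ∈ s(y₃,t))) (hwt ▸ hw2)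
  have hy3f₂ : y₃ ∈ f₂ := by
    have : em0 = f₂ := by
      rw [hm0eq] at hm0Q
      rw [hj] at hm0Q
      exact (Option.some.inj hm0Q).symm
    exact this ▸ hy3m0
  have hy3not : ∀ m, m < j → ∀ e', Q2.seq m = some e' → y₃ ∉ e' := by
    intro m hm e' hme hye
    exact absurd (hy3unique m (by omega) e' hme hye) (by omega)
  -- key vertices vj (tip of f₂) and vjm1
  obtain ⟨eL, hLs⟩ := hQ2some (j - 1) (by omega)
  obtain ⟨eL2, hL2s⟩ := hQ2some (j - 2) (by omega)
  have hcolL : c eL = some β₂ := by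
    have := hcolQ (j - 1) eL hLs
    rwa [if_neg (by omega)] at this
  have hcolL2 : c eL2 = some α₂ := by
    have := hcolQ (j - 2) eL2 hL2s
    rwa [if_pos (by omega)] at this
  have hLE : eL ∈ G.edgeSet := hedQ (j - 1) eL hLs
  have hL2E : eL2 ∈ G.edgeSet := hedQ (j - 2) eL2 hL2s
  obtain ⟨vj, hvjL, hvjf⟩ := hQ2.chain (j - 1) eL f₂ hLs
    (by rw [show j - 1 + 1 = j from by omega]; exact hj)
  obtain ⟨tf, hf₂eq, htfne⟩ := edge_other hf₂E hy3f₂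
  have hvjtf : vj = tf := by
    rw [hf₂eq] at hvjf
    rcases Sym2.mem_iff.mp hvjf with h | h
    · exact absurd (h ▸ hvjL) (hy3not (j - 1) (by omega) eL hLs)
    · exact h
  have hf₂mem : ∀ v, v ∈ f₂ → v = y₃ ∨ v = vj := by
    intro v hv
    rw [hf₂eq] at hv
    rcases Sym2.mem_iff.mp hv with h | h
    · exact Or.inl h
    · exact Or.inr (hvjtf ▸ h)
  obtain ⟨vjm1, hvm1L2, hvm1L⟩ := hQ2.chain (j - 2) eL2 eL hL2s
    (by rw [show j - 2 + 1 = j - 1 from by omega]; exact hLs)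
  have hvne : vjm1 ≠ vj := by
    intro h
    exact three_edges (j - 2) (j - 1) j eL2 eL f₂ (by omega) (by omega)
      hL2s hLs hj hvm1L2 hvm1L (h ▸ hvjf)
  have hmemL : ∀ v, v ∈ eL → v = vjm1 ∨ v = vj := by
    intro v hv
    obtain ⟨t, hteq, htne⟩ := edge_other hLE hvjL
    have hvm1t : vjm1 = t := by
      rw [hteq] at hvm1L
      rcases Sym2.mem_iff.mp hvm1L with h | h
      · exact absurd h hvne
      · exact h
    rw [hteq] at hv
    rcases Sym2.mem_iff.mp hv with h | h
    · exact Or.inr h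
    · exact Or.inl (hvm1t ▸ h)

  -- fan facts
  have hfanlt : ∀ i e', F3.seq i = some e' → i < K := by
    intro i e' hi
    by_contra h
    rw [F3.seq_none_mono hF3len.1 (by omega)] at hi
    exact nomatch hi
  have hfanstep : ∀ i ei ei1, F3.seq i = some ei → F3.seq (i + 1) = some ei1 →
      ∀ u, u ∈ ei → u ≠ y₃ →
      ∃ γ, c ei1 = some γ ∧ γ ∈ missing G c u ∧ γ ≠ α₂ ∧ γ ≠ β₂ := by
    intro i ei ei1 hi hi1 u hu huy
    obtain ⟨γ, hmin, hcol⟩ := hF3.step i ei ei1 hi hi1 u hu huy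
    have hcond := hF3.cond i ei hi (by rw [hi1]; rfl) u hu huy
    exact ⟨γ, hcol, hmin.1, fun h => hcond.1 (h ▸ hmin.1), fun h => hcond.2 (h ▸ hmin.1)⟩
  have hfantip : ∀ i e', F3.seq i = some e' → ∃ u, e' = s(y₃, u) ∧ u ≠ y₃ ∧ u ∈ e' := by
    intro i e' hi
    obtain ⟨hy, hE⟩ := hF3.aty i e' hi
    obtain ⟨u, heq, hne⟩ := edge_other hE hy
    exact ⟨u, heq, fun h => hne h.symm, by rw [heq]; exact Sym2.mem_mk_right y₃ u⟩
  have hfancolored : ∀ i e', F3.seq (i + 1) = some e' → ∃ γ, c e' = some γ := by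
    intro i e' hi
    obtain ⟨ep, hep⟩ := Option.isSome_iff_exists.mp
      (F3.isSome_of_le (m := i) (n := i + 1) (by rw [hi]; rfl) (by omega))
    obtain ⟨u, heq, hune, humem⟩ := hfantip i ep hep
    obtain ⟨γ, hγ, _⟩ := hfanstep i ep e' hep hi u humem hune
    exact ⟨γ, hγ⟩
  have hfan_notR : ∀ i e', F3.seq i = some e' → ¬ R.mem e' := by
    intro i e' hi hmem
    obtain ⟨hy, hE⟩ := hF3.aty i e' hi
    exact hnotR e' hmem f₂ hf₂E y₃ y₃ hy hy3f₂ hy3f₂ hy3f₂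
  have hfan_notQ : ∀ i e', F3.seq i = some e' → ∀ m, m < j → Q2.seq m ≠ some e' := by
    intro i e' hi m hm hQm
    cases i with
    | zero =>
      rw [hF3.first] at hi
      have : f₂ = e' := Option.some.inj hi
      subst this
      exact absurd (hQ2.inj m j f₂ hQm hj) (by omega)
    | succ i' =>
      obtain ⟨ep, hep⟩ := Option.isSome_iff_exists.mp
        (F3.isSome_of_le (m := i') (n := i' + 1) (by rw [hi]; rfl) (by omega))
      obtain ⟨u, heq, hune, humem⟩ := hfantip i' ep hep
      obtain ⟨γ, hγ, _, hγα, hγβ⟩ := hfanstep i' ep e' hep hi u humem hune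
      have := hcolQ m e' hQm
      rw [hγ] at this
      by_cases hpar : m % 2 = 0
      · rw [if_pos hpar] at this; exact hγα (Option.some.inj this)
      · rw [if_neg hpar] at this; exact hγβ (Option.some.inj this)
  -- region classification
  have hPcases : ∀ m e', P.seq m = some e' →
      (m < N ∧ R.seq m = some e') ∨
      (N ≤ m ∧ m < N + j ∧ Q2.seq (m - N) = some e') ∨
      (N + j ≤ m ∧ m < N + j + K ∧ F3.seq (m - N - j) = some e') := by
    intro m e' hm
    rw [hPseq m] at hm
    by_cases h1 : m < N
    · rw [if_pos h1] at hm; exact Or.inl ⟨h1, hm⟩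
    · rw [if_neg h1] at hm
      by_cases h2 : m < N + j
      · rw [if_pos h2] at hm; exact Or.inr (Or.inl ⟨by omega, h2, hm⟩)
      · rw [if_neg h2] at hm
        by_cases h3 : m < N + j + K
        · rw [if_pos h3] at hm; exact Or.inr (Or.inr ⟨by omega, h3, hm⟩)
        · rw [if_neg h3] at hm; exact nomatch hm
  have hRP2low : ∀ m, m < N + j → (R.append P2).seq m = P.seq m := by
    intro m hm
    rw [hPseq m, hRP2seq m]
    by_cases h1 : m < N
    · rw [if_pos h1, if_pos h1]
    · rw [if_neg h1, if_neg h1, if_pos hm, if_pos hm]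
  have hRP2inj := hRP2.1.inj
  have hPinj : P.EdgeInj := by
    have mixed : ∀ m n e', m < N + j → N + j ≤ n → P.seq m = some e' → P.seq n = some e' →
        False := by
      intro m n e' hm hn hms hns
      have hfan : F3.seq (n - N - j) = some e' := by
        rcases hPcases n e' hns with ⟨h, _⟩ | ⟨h, _, _⟩ | ⟨_, _, h⟩
        · omega
        · omega
        · exact h
      rcases hPcases m e' hms with ⟨h, hs⟩ | ⟨h, h2, hs⟩ | ⟨h, _, _⟩
      · exact hfan_notR (n - N - j) e' hfan ⟨m, hs⟩
      · exact hfan_notQ (n - N - j) e' hfan (m - N) (by omega) hs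
      · omega
    intro m n e' hm hn
    rcases Nat.lt_or_ge m (N + j) with h1 | h1 <;> rcases Nat.lt_or_ge n (N + j) with h2 | h2
    · have hm' : (R.append P2).seq m = some e' := by rw [hRP2low m h1]; exact hm
      have hn' : (R.append P2).seq n = some e' := by rw [hRP2low n h2]; exact hn
      exact hRP2inj m n e' hm' hn'
    · exact absurd (mixed m n e' h1 h2 hm hn) (fun h => h)
    · exact absurd (mixed n m e' h2 h1 hn hm) (fun h => h)
    · have hmf : F3.seq (m - N - j) = some e' := by
        rcases hPcases m e' hm with ⟨h, _⟩ | ⟨h, h', _⟩ | ⟨_, _, h⟩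
        · omega
        · omega
        · exact h
      have hnf : F3.seq (n - N - j) = some e' := by
        rcases hPcases n e' hn with ⟨h, _⟩ | ⟨h, h', _⟩ | ⟨_, _, h⟩
        · omega
        · omega
        · exact h
      have := hF3.inj (m - N - j) (n - N - j) e' hmf hnf
      omega

  -- shift value computations
  have hPnext : ∀ n g', P.seq n = some g' → P.shift c g' = (P.seq (n + 1)).bind c :=
    fun n g' h => EChain.shift_eq_of_some hPinj h
  have hRP2next : ∀ n g', (R.append P2).seq n = some g' →
      (R.append P2).shift c g' = ((R.append P2).seq (n + 1)).bind c :=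
    fun n g' h => EChain.shift_eq_of_some hRP2inj h
  have hLP : P.seq (N + j - 1) = some eL := by
    rw [hPseq, if_neg (by omega), if_pos (by omega), show N + j - 1 - N = j - 1 from by omega]
    exact hLs
  have hf₂P : P.seq (N + j) = some f₂ := by
    rw [hPseq, if_neg (by omega), if_neg (by omega), if_pos (by omega),
      show N + j - N - j = 0 from by omega]
    exact hF3.first
  have hL2P : P.seq (N + j - 2) = some eL2 := by
    rw [hPseq, if_neg (by omega), if_pos (by omega), show N + j - 2 - N = j - 2 from by omega]
    exact hL2s
  have hfanP : ∀ i e', F3.seq i = some e' → P.seq (N + j + i) = some e' := by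
    intro i e' hi
    have hiK := hfanlt i e' hi
    rw [hPseq, if_neg (by omega), if_neg (by omega), if_pos (by omega),
      show N + j + i - N - j = i from by omega]
    exact hi
  have hvalL : P.shift c eL = some α₂ := by
    rw [hPnext (N + j - 1) eL hLP, show N + j - 1 + 1 = N + j from by omega, hf₂P]
    exact hsuit3
  have hvalFan : ∀ i e', F3.seq i = some e' → P.shift c e' = (F3.seq (i + 1)).bind c := by
    intro i e' hi
    have hseq2 : P.seq (N + j + i + 1) = F3.seq (i + 1) := by
      rw [hPseq, if_neg (by omega), if_neg (by omega)]
      by_cases h : N + j + i + 1 < N + j + K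
      · rw [if_pos h, show N + j + i + 1 - N - j = i + 1 from by omega]
      · rw [if_neg h, F3.seq_none_mono hF3len.1 (by omega)]
    rw [hPnext _ _ (hfanP i e' hi), hseq2]
  have hRP2mem_of : ∀ g', ¬ P.mem g' → ¬ (R.append P2).mem g' := by
    rintro g' hg' ⟨n, hn⟩
    by_cases h : n < N + j
    · exact hg' ⟨n, by rw [← hRP2low n h]; exact hn⟩
    · rw [hRP2seq, if_neg (by omega), if_neg (by omega)] at hn
      exact nomatch hn
  have hA_val : ∀ g', ((¬ P.mem g') ∨ ∃ n, n < N + j - 1 ∧ P.seq n = some g') →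
      P.shift c g' = (R.append P2).shift c g' := by
    intro g' hg'
    rcases hg' with h | ⟨n, hn, hns⟩
    · rw [EChain.shift_eq_of_not_mem h, EChain.shift_eq_of_not_mem (hRP2mem_of g' h)]
    · rw [hPnext n g' hns, hRP2next n g' (by rw [hRP2low n (by omega)]; exact hns),
        hRP2low (n + 1) (by omega)]
  -- IsShiftable
  have hchain : P.IsChainSeq := by
    intro n e' f' hn hn1
    rcases hPcases (n + 1) f' hn1 with ⟨h1, hs1⟩ | ⟨h1, h2, hs1⟩ | ⟨h1, h2, hs1⟩
    · have hnR : R.seq n = some e' := by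
        have hh := hn; rw [hPseq, if_pos (by omega)] at hh; exact hh
      exact hRps.1.chain n e' f' hnR hs1
    · by_cases h0 : n + 1 = N
      · have hnR : R.seq n = some e' := by
          have hh := hn; rw [hPseq, if_pos (by omega)] at hh; exact hh
        have he'eq : e' = s(y₂, z₂) := by
          have hh := hRlast; rw [show N - 1 = n from by omega, hnR] at hh
          exact Option.some.inj hh
        have hf0 : Q2.seq 0 = some f' := by
          rw [show (0 : ℕ) = n + 1 - N from by omega]; exact hs1
        exact ⟨z₂, by rw [he'eq]; exact Sym2.mem_mk_right y₂ z₂, hQ2.start f' hf0⟩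
      · have hnQ : Q2.seq (n - N) = some e' := by
          have hh := hn; rw [hPseq, if_neg (by omega), if_pos (by omega)] at hh; exact hh
        exact hQ2.chain (n - N) e' f' hnQ
          (by rw [show n - N + 1 = n + 1 - N from by omega]; exact hs1)
    · by_cases h0 : n + 1 = N + j
      · have hnQ : Q2.seq (j - 1) = some e' := by
          have hh := hn
          rw [hPseq, if_neg (by omega), if_pos (by omega),
            show n - N = j - 1 from by omega] at hh
          exact hh
        have he'eq : e' = eL := by rw [hLs] at hnQ; exact (Option.some.inj hnQ).symm
        have hf'eq : f' = f₂ := by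
          have hh := hs1
          rw [show n + 1 - N - j = 0 from by omega, hF3.first] at hh
          exact (Option.some.inj hh).symm
        exact ⟨vj, he'eq ▸ hvjL, hf'eq ▸ hvjf⟩
      · have hnF : F3.seq (n - N - j) = some e' := by
          have hh := hn
          rw [hPseq, if_neg (by omega), if_neg (by omega), if_pos (by omega)] at hh
          exact hh
        exact ⟨y₃, (hF3.aty _ e' hnF).1, (hF3.aty _ f' hs1).1⟩
  have hedges : ∀ n e', P.seq n = some e' → e' ∈ G.edgeSet := by
    intro n e' hn
    rcases hPcases n e' hn with ⟨_, hs⟩ | ⟨_, _, hs⟩ | ⟨_, _, hs⟩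
    · exact hRps.1.edges _ _ hs
    · exact hedQ _ _ hs
    · exact (hF3.aty _ _ hs).2
  have hfirst : ∃ e', P.seq 0 = some e' ∧ c e' = none := by
    obtain ⟨e', h1, h2⟩ := hRps.1.first
    exact ⟨e', by rw [hPseq, if_pos (by omega)]; exact h1, h2⟩
  have hrest : ∀ n e', P.seq (n + 1) = some e' → (c e').isSome := by
    intro n e' hn
    rcases hPcases (n + 1) e' hn with ⟨h1, hs⟩ | ⟨h1, h2, hs⟩ | ⟨h1, h2, hs⟩
    · exact hRps.1.rest n e' hs
    · rw [hcolQ (n + 1 - N) e' hs]; rfl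
    · rcases Nat.eq_zero_or_pos (n + 1 - N - j) with h0 | hpos
      · have hf : f₂ = e' := by
          rw [h0, hF3.first] at hs; exact Option.some.inj hs
        rw [← hf, hsuit3]; rfl
      · obtain ⟨γ, hγ⟩ := hfancolored (n + 1 - N - j - 1) e'
          (by rw [show n + 1 - N - j - 1 + 1 = n + 1 - N - j from by omega]; exact hs)
        rw [hγ]; rfl
  have hpcE : ∀ e', ((P.shift c) e').isSome → e' ∈ G.edgeSet := by
    intro e' h
    by_cases hm : P.mem e'
    · obtain ⟨n, hn⟩ := hm; exact hedges n e' hn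
    · rw [EChain.shift_eq_of_not_mem hm] at h; exact hcE e' h
  refine ⟨⟨hchain, hedges, hPinj, hfirst, hrest⟩, hpcE, ?_⟩
  have hbind : ∀ o : Sym2 V, (some o).bind c = c o := fun _ => rfl
  have hbindn : (none : Option (Sym2 V)).bind c = none := rfl
  have hcat : ∀ g', P.mem g' →
      (∃ n, n < N + j - 1 ∧ P.seq n = some g') ∨ g' = eL ∨ ∃ i, F3.seq i = some g' := by
    rintro g' ⟨n, hn⟩
    by_cases h1 : n < N + j - 1
    · exact Or.inl ⟨n, h1, hn⟩
    · rcases hPcases n g' hn with ⟨h, hs⟩ | ⟨h, h2, hs⟩ | ⟨h, h2, hs⟩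
      · exact absurd h (by omega)
      · have hnn : n - N = j - 1 := by omega
        rw [hnn, hLs] at hs
        exact Or.inr (Or.inl (Option.some.inj hs).symm)
      · exact Or.inr (Or.inr ⟨n - N - j, hs⟩)
  have hA_ne_alpha : ∀ g', ((¬ P.mem g') ∨ ∃ n, n < N + j - 1 ∧ P.seq n = some g') →
      ∀ v : V, v ∈ g' → v ∈ eL → (R.append P2).shift c g' ≠ some α₂ := by
    intro g' hg' v hvg hvL hval
    rcases hg' with h | ⟨n, hn, hns⟩
    · rw [EChain.shift_eq_of_not_mem (hRP2mem_of g' h)] at hval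
      rcases hmemL v hvL with hveq | hveq <;> rw [hveq] at hvg
      · by_cases hgL2 : g' = eL2
        · exact h ⟨N + j - 2, hgL2 ▸ hL2P⟩
        · exact hcP g' eL2 hgL2 ⟨vjm1, hvg, hvm1L2⟩ (by rw [hval]; rfl)
            (by rw [hval, hcolL2])
      · by_cases hgf : g' = f₂
        · exact h ⟨N + j, hgf ▸ hf₂P⟩
        · exact hcP g' f₂ hgf ⟨vj, hvg, hvjf⟩ (by rw [hval]; rfl) (by rw [hval, hsuit3])
    · rw [hRP2next n g' (by rw [hRP2low n (by omega)]; exact hns),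
        hRP2low (n + 1) (by omega)] at hval
      rcases hPcases n g' hns with ⟨h1, hs⟩ | ⟨h1, h2, hs⟩ | ⟨h1, h2, hs⟩
      · exact hnotR g' ⟨n, hs⟩ eL hLE v vj hvg hvL hvjL hvjf
      · rcases hmemL v hvL with hveq | hveq <;> rw [hveq] at hvg
        · by_cases hm2 : n - N = j - 2
          · have hval2 : P.seq (n + 1) = some eL := by
              rw [hPseq, if_neg (by omega), if_pos (by omega),
                show n + 1 - N = j - 1 from by omega]
              exact hLs
            rw [hval2, hbind, hcolL] at hval
            exact hαβ (Option.some.inj hval).symm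
          · exact three_edges (n - N) (j - 2) (j - 1) g' eL2 eL (by omega) (by omega)
              hs hL2s hLs hvg hvm1L2 hvm1L
        · exact three_edges (n - N) (j - 1) j g' eL f₂ (by omega) (by omega)
            hs hLs hj hvg hvjL hvjf
      · exact absurd h1 (by omega)
  have hA_ne_fan : ∀ i gi gi1, F3.seq i = some gi → F3.seq (i + 1) = some gi1 →
      ∀ g', ((¬ P.mem g') ∨ ∃ n, n < N + j - 1 ∧ P.seq n = some g') →
      ∀ v : V, v ∈ g' → v ∈ gi → (R.append P2).shift c g' ≠ c gi1 := by
    intro i gi gi1 hgi hgi1 g' hg' v hvg hvgi hval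
    obtain ⟨u, heq, hune, humem⟩ := hfantip i gi hgi
    obtain ⟨γ, hγ, hγmiss, hγα, hγβ⟩ := hfanstep i gi gi1 hgi hgi1 u humem hune
    rw [hγ] at hval
    have hvcases : v = y₃ ∨ v = u := by
      rw [heq] at hvgi
      rcases Sym2.mem_iff.mp hvgi with h | h
      · exact Or.inl h
      · exact Or.inr h
    rcases hg' with h | ⟨n, hn, hns⟩
    · rw [EChain.shift_eq_of_not_mem (hRP2mem_of g' h)] at hval
      rcases hvcases with hveq | hveq <;> rw [hveq] at hvg
      · have hy3gi1 : y₃ ∈ gi1 := (hF3.aty (i + 1) gi1 hgi1).1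
        by_cases hgg : g' = gi1
        · exact h ⟨N + j + (i + 1), hgg ▸ hfanP (i + 1) gi1 hgi1⟩
        · exact hcP g' gi1 hgg ⟨y₃, hvg, hy3gi1⟩ (by rw [hval]; rfl) (by rw [hval, hγ])
      · exact hγmiss g' (hcE g' (by rw [hval]; rfl)) hvg hval
    · rw [hRP2next n g' (by rw [hRP2low n (by omega)]; exact hns),
        hRP2low (n + 1) (by omega)] at hval
      rcases hPcases n g' hns with ⟨h1, hs⟩ | ⟨h1, h2, hs⟩ | ⟨h1, h2, hs⟩
      · exact hnotR g' ⟨n, hs⟩ gi ((hF3.aty i gi hgi).2) v y₃ hvg hvgi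
          ((hF3.aty i gi hgi).1) hy3f₂
      · obtain ⟨em1, hem1⟩ := hQ2some (n - N + 1) (by omega)
        have hval2 : P.seq (n + 1) = some em1 := by
          rw [hPseq, if_neg (by omega), if_pos (by omega),
            show n + 1 - N = n - N + 1 from by omega]
          exact hem1
        rw [hval2, hbind, hcolQ (n - N + 1) em1 hem1] at hval
        by_cases hpar : (n - N + 1) % 2 = 0
        · rw [if_pos hpar] at hval; exact hγα (Option.some.inj hval).symm
        · rw [if_neg hpar] at hval; exact hγβ (Option.some.inj hval).symm
      · exact absurd h1 (by omega)
  intro x y hxy hshare hxs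
  obtain ⟨v, hvx, hvy⟩ := hshare
  have hcatx : ∀ g', ((¬ P.mem g') ∨ ∃ n, n < N + j - 1 ∧ P.seq n = some g') ∨
      g' = eL ∨ ∃ i, F3.seq i = some g' := by
    intro g'
    by_cases h : P.mem g'
    · rcases hcat g' h with h1 | h1 | h1
      · exact Or.inl (Or.inr h1)
      · exact Or.inr (Or.inl h1)
      · exact Or.inr (Or.inr h1)
    · exact Or.inl (Or.inl h)
  rcases hcatx x with hAx | rfl | ⟨i, hix⟩ <;> rcases hcatx y with hAy | rfl | ⟨i', hiy⟩
  · rw [hA_val x hAx, hA_val y hAy]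
    rw [hA_val x hAx] at hxs
    exact hRP2.2.2 x y hxy ⟨v, hvx, hvy⟩ hxs
  · rw [hA_val x hAx, hvalL]
    exact hA_ne_alpha x hAx v hvx hvy
  · rw [hA_val x hAx, hvalFan i' y hiy]
    cases hnext : F3.seq (i' + 1) with
    | none =>
      rw [hbindn]
      rw [hA_val x hAx] at hxs
      intro hEq
      rw [hEq] at hxs
      simp at hxs
    | some gi1 =>
      rw [hbind]
      exact hA_ne_fan i' y gi1 hiy hnext x hAx v hvx hvy
  · rw [hvalL, hA_val y hAy]
    exact fun hEq => hA_ne_alpha y hAy v hvy hvx hEq.symm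
  · exact absurd rfl hxy
  · rw [hvalL, hvalFan i' y hiy]
    cases hnext : F3.seq (i' + 1) with
    | none => rw [hbindn]; exact fun hEq => nomatch hEq
    | some gi1 =>
      rw [hbind]
      obtain ⟨u, heq, hune, humem⟩ := hfantip i' y hiy
      obtain ⟨γ, hγ, _, hγα, _⟩ := hfanstep i' y gi1 hiy hnext u humem hune
      rw [hγ]
      exact fun hEq => hγα (Option.some.inj hEq).symm
  · rw [hvalFan i x hix, hA_val y hAy]
    cases hnext : F3.seq (i + 1) with
    | none =>
      exfalso
      rw [hvalFan i x hix, hnext, hbindn] at hxs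
      simp at hxs
    | some gi1 =>
      rw [hbind]
      exact fun hEq => hA_ne_fan i x gi1 hix hnext y hAy v hvy hvx hEq.symm
  · rw [hvalFan i x hix, hvalL]
    cases hnext : F3.seq (i + 1) with
    | none =>
      exfalso
      rw [hvalFan i x hix, hnext, hbindn] at hxs
      simp at hxs
    | some gi1 =>
      rw [hbind]
      obtain ⟨u, heq, hune, humem⟩ := hfantip i x hix
      obtain ⟨γ, hγ, _, hγα, _⟩ := hfanstep i x gi1 hix hnext u humem hune
      rw [hγ]
      exact fun hEq => hγα (Option.some.inj hEq)
  · rw [hvalFan i x hix, hvalFan i' y hiy]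
    cases hnext : F3.seq (i + 1) with
    | none =>
      exfalso
      rw [hvalFan i x hix, hnext, hbindn] at hxs
      simp at hxs
    | some gi1 =>
      cases hnext' : F3.seq (i' + 1) with
      | none =>
        rw [hbind, hbindn]
        obtain ⟨γ, hγ⟩ := hfancolored i gi1 hnext
        rw [hγ]
        exact fun hEq => nomatch hEq
      | some gi1' =>
        rw [hbind, hbind]
        intro hEq
        have h1 : y₃ ∈ gi1 := (hF3.aty _ _ hnext).1
        have h2 : y₃ ∈ gi1' := (hF3.aty _ _ hnext').1
        have hnegg : gi1 ≠ gi1' := by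
          intro hgg
          have hii := hF3.inj (i + 1) (i' + 1) gi1 hnext (hgg ▸ hnext')
          have hii' : i = i' := by omega
          subst hii'
          rw [hix] at hiy
          exact hxy (Option.some.inj hiy)
        obtain ⟨γ, hγ⟩ := hfancolored i gi1 hnext
        exact hcP gi1 gi1' hnegg ⟨y₃, h1, h2⟩ (by rw [hγ]; rfl) hEq
end

section
/- Let c be a partial coloring of a graph 𝒢 with maximum degree Δ, and let P be a c-augmenting chain with first edge e₀ ∈ U_c. Then there exists a partial proper edge coloring c': E ⇀ {1,…,Δ+1} with dom(c') = dom(c) ∪ {e₀} such that c'(f) = c(f) for every edge f not occurring in P. -/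
open MeasureTheory
open scoped ENNReal

/-- Augmenting along a `c`-augmenting chain: there is a proper partial coloring `c'` whose
domain is `dom(c) ∪ {e₀}` and which agrees with `c` off the chain. -/
theorem augment_along_chain {V : Type} (Δ : ℕ) (G : SimpleGraph V)
    (hdeg : DegreeBounded G Δ)
    (c : Sym2 V → Option (Fin (Δ + 1))) (hc : IsPartialColoring G Δ c)
    (P : EChain V) (e₀ : Sym2 V) (hP0 : P.seq 0 = some e₀)
    (he₀ : e₀ ∈ G.edgeSet ∧ c e₀ = none)
    (haug : IsAugmenting G Δ c P) :
    ∃ c' : Sym2 V → Option (Fin (Δ + 1)), IsPartialColoring G Δ c' ∧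
      {e : Sym2 V | (c' e).isSome} = insert e₀ {e : Sym2 V | (c e).isSome} ∧
      ∀ f : Sym2 V, ¬ P.mem f → c' f = c f := by
  classical
  obtain ⟨⟨hshift, hprop⟩, hcase⟩ := haug
  have hshift_eq : ∀ (f : Sym2 V) (m : ℕ), P.seq m = some f →
      P.shift c f = (P.seq (m + 1)).bind c := by
    intro f m hm
    have h : ∃ n, P.seq n = some f := ⟨m, hm⟩
    have hfind : Nat.find h = m := hshift.inj _ _ _ (Nat.find_spec h) hm
    show (if h : ∃ n, P.seq n = some f then (P.seq (Nat.find h + 1)).bind c else c f)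
      = (P.seq (m + 1)).bind c
    rw [dif_pos h, hfind]
  have hshift_off : ∀ f, ¬ P.mem f → P.shift c f = c f := by
    intro f hf
    show (if h : ∃ n, P.seq n = some f then (P.seq (Nat.find h + 1)).bind c else c f) = c f
    exact dif_neg hf
  have hmono : ∀ k m, k ≤ m → P.seq k = none → P.seq m = none := by
    intro k m hkm hk
    induction m, hkm using Nat.le_induction with
    | base => exact hk
    | succ m _ ih => exact P.closed m ih
  rcases hcase with hinf | ⟨n, e, hn, hn1, γ, hγ⟩
  · -- infinite case: the shift itself works
    refine ⟨P.shift c, hprop, ?_, hshift_off⟩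
    ext f
    simp only [Set.mem_setOf_eq, Set.mem_insert_iff]
    constructor
    · intro hf
      by_cases hmem : P.mem f
      · obtain ⟨m, hm⟩ := hmem
        rcases m with _ | k
        · left; exact (Option.some_injective _ (hP0.symm.trans hm)).symm
        · right; exact hshift.rest k f hm
      · right; rwa [hshift_off f hmem] at hf
    · rintro (rfl | hf)
      · rw [hshift_eq f 0 hP0]
        obtain ⟨e₁, he₁⟩ := Option.isSome_iff_exists.mp (hinf 1)
        rw [he₁]
        exact hshift.rest 0 e₁ he₁
      · by_cases hmem : P.mem f
        · obtain ⟨m, hm⟩ := hmem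
          rw [hshift_eq f m hm]
          obtain ⟨g, hg⟩ := Option.isSome_iff_exists.mp (hinf (m + 1))
          rw [hg]
          exact hshift.rest m g hg
        · rwa [hshift_off f hmem]
  · -- finite case: color the last edge e with γ
    have hlt : ∀ m f, P.seq m = some f → m ≤ n := by
      intro m f hm
      by_contra h
      have := hmono (n + 1) m (by omega) hn1
      rw [hm] at this; exact absurd this (Option.some_ne_none _)
    refine ⟨fun f => if f = e then some γ else P.shift c f, ⟨?_, ?_⟩, ?_, ?_⟩
    · intro f hf
      dsimp only at hf
      by_cases hfe : f = e
      · subst hfe; exact hshift.edges n f hn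
      · rw [if_neg hfe] at hf; exact hprop.1 f hf
    · intro f g hfg hv hf
      dsimp only at hf ⊢
      obtain ⟨v, hvf, hvg⟩ := hv
      by_cases hfe : f = e
      · subst hfe
        rw [if_pos rfl]
        rw [if_neg (fun h => hfg h.symm)]
        intro heq
        have hgs : (P.shift c g).isSome := by rw [← heq]; rfl
        exact hγ v hvf g (hprop.1 g hgs) hvg heq.symm
      · by_cases hge : g = e
        · subst hge
          rw [if_neg hfe] at hf ⊢
          rw [if_pos rfl]
          exact hγ v hvg f (hprop.1 f hf) hvf
        · rw [if_neg hfe] at hf ⊢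
          rw [if_neg hge]
          exact hprop.2 f g hfg ⟨v, hvf, hvg⟩ hf
    · ext f
      simp only [Set.mem_setOf_eq, Set.mem_insert_iff]
      constructor
      · intro hf
        by_cases hfe : f = e
        · subst hfe
          rcases Nat.eq_zero_or_pos n with rfl | hpos
          · left; exact (Option.some_injective _ (hP0.symm.trans hn)).symm
          · right
            obtain ⟨k, rfl⟩ := Nat.exists_eq_add_of_lt hpos
            exact hshift.rest _ f (by rwa [Nat.zero_add] at hn)
        · rw [if_neg hfe] at hf
          by_cases hmem : P.mem f
          · obtain ⟨m, hm⟩ := hmem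
            rcases m with _ | k
            · left; exact (Option.some_injective _ (hP0.symm.trans hm)).symm
            · right; exact hshift.rest k f hm
          · right; rwa [hshift_off f hmem] at hf
      · rintro (rfl | hf)
        · by_cases hfe : f = e
          · rw [if_pos hfe]; rfl
          · rw [if_neg hfe, hshift_eq f 0 hP0]
            have hne0 : n ≠ 0 := by
              intro h; subst h
              exact hfe (Option.some_injective _ (hP0.symm.trans hn))
            have h1 : (P.seq 1).isSome := by
              rcases h : P.seq 1 with _ | g
              · have := hmono 1 n (by omega) h
                rw [hn] at this; exact absurd this (Option.some_ne_none _)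
              · rfl
            obtain ⟨e₁, he₁⟩ := Option.isSome_iff_exists.mp h1
            rw [he₁]
            exact hshift.rest 0 e₁ he₁
        · by_cases hfe : f = e
          · rw [if_pos hfe]; rfl
          · rw [if_neg hfe]
            by_cases hmem : P.mem f
            · obtain ⟨m, hm⟩ := hmem
              rw [hshift_eq f m hm]
              have hmn : m ≠ n := by
                intro h; subst h
                exact hfe (Option.some_injective _ (hm.symm.trans hn))
              have hmlt : m < n := lt_of_le_of_ne (hlt m f hm) hmn
              have h1 : (P.seq (m + 1)).isSome := by
                rcases h : P.seq (m + 1) with _ | g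
                · have := hmono (m + 1) n (by omega) h
                  rw [hn] at this; exact absurd this (Option.some_ne_none _)
                · rfl
              obtain ⟨g, hg⟩ := Option.isSome_iff_exists.mp h1
              rw [hg]
              exact hshift.rest m g hg
            · rwa [hshift_off f hmem]
    · intro f hmem
      dsimp only
      have hfe : f ≠ e := fun h => hmem ⟨n, h ▸ hn⟩
      rw [if_neg hfe]
      exact hshift_off f hmem
end
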